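/- Let σ: Π → Γ be a strong formal subdivision of rank 0 between lower Eulerian posets and suppose Γ is near-Eulerian. Then Π is near-Eulerian, σ extends to a strong formal subdivision σ̃: Σ̃Π ∪ {1̂} → Σ̃Γ ∪ {1̂} between the corresponding Eulerian posets obtained from the semisuspensions (namely the extension of σ over Σ̃Γ ∪ {1̂}, which sends the semisuspension vertex q_Π to q_Γ), and σ^{-1}(∂Γ) = ∂Π. -/

import Mathlib

open scoped Classical

noncomputable section

namespace CDIndex

variable {α β : Type}

/-- The natural rank function of a graded poset: `rho x` is one less than the largest
cardinality of a chain contained in `Set.Iic x` (i.e. the length of a maximal chain of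
the interval `[0̂, x]`). -/
def rho [PartialOrder α] (x : α) : ℕ :=
  sSup {k : ℕ | ∃ s : Finset α,
    IsChain (· ≤ ·) (s : Set α) ∧ (s : Set α) ⊆ Set.Iic x ∧ s.card = k + 1}

/-- A subset `S` of a poset is graded of rank `n` if every maximal chain of `S`
has exactly `n + 1` elements (i.e. length `n`). -/
def IsGradedSetOfRank [PartialOrder α] (S : Set α) (n : ℕ) : Prop :=
  ∀ s : Finset α, (s : Set α) ⊆ S → IsChain (· ≤ ·) (s : Set α) →
    (∀ t : Finset α, (t : Set α) ⊆ S → IsChain (· ≤ ·) (t : Set α) → s ⊆ t → s = t) →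
    s.card = n + 1

/-- A poset is graded of rank `n` if every maximal chain has length `n`. -/
def IsGradedOfRank (α : Type) [PartialOrder α] (n : ℕ) : Prop :=
  IsGradedSetOfRank (Set.univ : Set α) n

/-- Every interval `[s, t]` with `s < t`, `s, t ∈ S`, has equally many elements of even
rank and of odd rank. -/
def BalancedIntervalsIn [PartialOrder α] (S : Set α) : Prop :=
  ∀ s ∈ S, ∀ t ∈ S, s < t →
    {y ∈ Set.Icc s t | Even (rho y)}.ncard = {y ∈ Set.Icc s t | Odd (rho y)}.ncard

/-- An Eulerian poset of rank `n`: a graded poset with `0̂` and `1̂` in which every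
interval of positive length has equally many elements of each parity of rank. -/
def IsEulerianOfRank (α : Type) [PartialOrder α] (n : ℕ) : Prop :=
  (∃ b : α, ∀ z, b ≤ z) ∧ (∃ t : α, ∀ z, z ≤ t) ∧
    IsGradedOfRank α n ∧ BalancedIntervalsIn (Set.univ : Set α)

/-- A lower Eulerian poset of rank `n`: a graded poset with `0̂` all of whose intervals
are Eulerian. -/
def IsLowerEulerianOfRank (α : Type) [PartialOrder α] (n : ℕ) : Prop :=
  (∃ b : α, ∀ z, b ≤ z) ∧ IsGradedOfRank α n ∧ BalancedIntervalsIn (Set.univ : Set α)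

/-- A lower order ideal `S` (of a poset) which is lower Eulerian of rank `n`. -/
def IsLowerEulerianSetOfRank [PartialOrder α] (S : Set α) (n : ℕ) : Prop :=
  IsGradedSetOfRank S n ∧ BalancedIntervalsIn S

/-- The boundary of (a lower order ideal `S` of) a graded poset of rank `n`: the lower
order ideal generated by the rank `n - 1` elements which are covered by exactly one
element. -/
def boundaryIn [PartialOrder α] (S : Set α) (n : ℕ) : Set α :=
  {y | y ∈ S ∧ ∃ x ∈ S, rho x = n - 1 ∧ {z ∈ S | x ⋖ z}.ncard = 1 ∧ y ≤ x}

/-- The boundary `∂P` of a graded poset of rank `n`. -/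
def boundary (α : Type) [PartialOrder α] (n : ℕ) : Set α :=
  boundaryIn (Set.univ : Set α) n

/-- `α` is a near-Eulerian poset of rank `n`: it is obtained from an Eulerian poset `Q`
of rank `n + 1` by removing the maximal element and one element `q` of rank `n`. -/
def IsNearEulerianOfRank (α : Type) [PartialOrder α] [Finite α] (n : ℕ) : Prop :=
  ∃ (Q : Type) (_ : PartialOrder Q) (_ : Finite Q) (q top : Q),
    IsEulerianOfRank Q (n + 1) ∧ (∀ z, z ≤ top) ∧ rho q = n ∧ q ≠ top ∧
    Nonempty (α ≃o {x : Q // x ≠ q ∧ x ≠ top})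

/-- `α` is (isomorphic to) the boundary of an Eulerian poset, where `α` has rank `n`
(so the Eulerian poset has rank `n + 1`). -/
def IsBoundaryOfEulerianOfRank (α : Type) [PartialOrder α] [Finite α] (n : ℕ) : Prop :=
  ∃ (Q : Type) (_ : PartialOrder Q) (_ : Finite Q) (top : Q),
    IsEulerianOfRank Q (n + 1) ∧ (∀ z, z ≤ top) ∧
    Nonempty (α ≃o {x : Q // x ≠ top})

/-! ### The semisuspension -/

/-- The semisuspension of `α` relative to a set `S` (intended: `S = ∂α`): the poset `α`
together with one new element `q` lying above `0̂` and above every element of `S`. -/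
@[ext] structure Semisusp (α : Type) (S : Set α) : Type where
  toOpt : Option α

namespace Semisusp

variable {S : Set α}

/-- The new vertex `q` of the semisuspension. -/
def q : Semisusp α S := ⟨none⟩

/-- The inclusion of `α` into its semisuspension. -/
def incl (a : α) : Semisusp α S := ⟨some a⟩

instance instPartialOrder [PartialOrder α] [OrderBot α] : PartialOrder (Semisusp α S) where
  le x y := match x, y with
    | ⟨some a⟩, ⟨some b⟩ => a ≤ b
    | ⟨some a⟩, ⟨none⟩ => a = ⊥ ∨ ∃ s ∈ S, a ≤ s
    | ⟨none⟩, ⟨some _⟩ => False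
    | ⟨none⟩, ⟨none⟩ => True
  le_refl x := by rcases x with ⟨_ | a⟩ <;> simp
  le_trans x y z hxy hyz := by
    rcases x with ⟨_ | a⟩ <;> rcases y with ⟨_ | b⟩ <;> rcases z with ⟨_ | c⟩ <;>
      simp_all
    · rcases hyz with h | ⟨s, hs, hbs⟩
      · subst h
        exact Or.inl (le_bot_iff.mp hxy)
      · exact Or.inr ⟨s, hs, le_trans hxy hbs⟩
    · exact le_trans hxy hyz
  le_antisymm x y hxy hyx := by
    rcases x with ⟨_ | a⟩ <;> rcases y with ⟨_ | b⟩ <;> simp_all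
    exact le_antisymm hxy hyx

instance [PartialOrder α] [OrderBot α] : OrderBot (Semisusp α S) where
  bot := ⟨some ⊥⟩
  bot_le x := by
    rcases x with ⟨_ | a⟩
    · exact Or.inl rfl
    · show (⊥ : α) ≤ a
      exact bot_le

def equivOption : Semisusp α S ≃ Option α where
  toFun := toOpt
  invFun := mk
  left_inv _ := rfl
  right_inv _ := rfl

instance [Finite α] : Finite (Semisusp α S) := by
  have := Fintype.ofFinite α
  exact Finite.of_equiv (Option α) (equivOption (S := S)).symm

end Semisusp

/-! ### Strong formal subdivisions -/

/-- A strong formal subdivision (of rank `0`, with the natural rank functions): an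
order-preserving, rank-increasing, surjective map which is strongly surjective and
satisfies the alternating-sum condition on fibers. -/
def IsSFS {α β : Type} [PartialOrder α] [PartialOrder β] (φ : α → β) : Prop :=
  Monotone φ ∧ (∀ y, rho y ≤ rho (φ y)) ∧ Function.Surjective φ ∧
  (∀ y x, φ y ≤ x → ∃ y', y ≤ y' ∧ φ y' = x ∧ rho y' = rho x) ∧
  (∀ y x, φ y ≤ x →
    (∑ᶠ y' ∈ {y' | φ y' = x ∧ y ≤ y'}, ((-1 : ℤ) ^ rho y')) = (-1) ^ rho x)

/-! ### Extensions of posets and poset maps -/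

/-- The extension `Π̃ = Π ∪ (B ∖ Γ)` of a poset `Π` over `B`, along a map
`σ : Π → B` whose image is the lower order ideal `Γ = G ⊆ B`.  Elements are either
elements of `Π` (`Sum.inl`) or elements of `B ∖ G` (`Sum.inr`). -/
@[ext] structure ExtP {α β : Type} (σ : α → β) (G : Set β) : Type where
  elt : α ⊕ {x : β // x ∉ G}

namespace ExtP

variable {σ : α → β} {G : Set β}

instance instPartialOrder [PartialOrder α] [PartialOrder β] : PartialOrder (ExtP σ G) where
  le p q := match p, q with
    | ⟨.inl y⟩, ⟨.inl y'⟩ => y ≤ y'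
    | ⟨.inl y⟩, ⟨.inr x⟩ => ∃ y', y ≤ y' ∧ σ y' ≤ (x : β)
    | ⟨.inr _⟩, ⟨.inl _⟩ => False
    | ⟨.inr x⟩, ⟨.inr x'⟩ => x ≤ x'
  le_refl p := by
    rcases p with ⟨y | x⟩
    · exact (le_refl y : y ≤ y)
    · exact (le_refl x : x ≤ x)
  le_trans p q r hpq hqr := by
    rcases p with ⟨yp | xp⟩ <;> rcases q with ⟨yq | xq⟩ <;> rcases r with ⟨yr | xr⟩
    · exact (le_trans (hpq : yp ≤ yq) (hqr : yq ≤ yr) : yp ≤ yr)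
    · obtain ⟨y', h1, h2⟩ := (hqr : ∃ y', yq ≤ y' ∧ σ y' ≤ (xr : β))
      exact (⟨y', le_trans (hpq : yp ≤ yq) h1, h2⟩ : ∃ y', yp ≤ y' ∧ σ y' ≤ (xr : β))
    · exact (hqr : False).elim
    · obtain ⟨y', h1, h2⟩ := (hpq : ∃ y', yp ≤ y' ∧ σ y' ≤ (xq : β))
      exact (⟨y', h1, le_trans h2 (hqr : (xq : β) ≤ (xr : β))⟩ :
        ∃ y', yp ≤ y' ∧ σ y' ≤ (xr : β))
    · exact (hpq : False).elim
    · exact (hpq : False).elim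
    · exact (hqr : False).elim
    · exact (le_trans (hpq : xp ≤ xq) (hqr : xq ≤ xr) : xp ≤ xr)
  le_antisymm p q hpq hqp := by
    rcases p with ⟨yp | xp⟩ <;> rcases q with ⟨yq | xq⟩
    · have h : yp = yq := le_antisymm (hpq : yp ≤ yq) (hqp : yq ≤ yp)
      subst h; rfl
    · exact (hqp : False).elim
    · exact (hpq : False).elim
    · have h : xp = xq := le_antisymm (hpq : xp ≤ xq) (hqp : xq ≤ xp)
      subst h; rfl

/-- The inclusion of `Π` into the extension. -/
def inclDom (y : α) : ExtP σ G := ⟨.inl y⟩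

/-- The inclusion of `B ∖ Γ` into the extension. -/
def inclCompl (x : {x : β // x ∉ G}) : ExtP σ G := ⟨.inr x⟩

/-- The extension `σ̃ : Π̃ → B` of `σ`: it is `σ` on `Π` and the identity on `B ∖ Γ`. -/
def extMap (σ : α → β) (G : Set β) (p : ExtP σ G) : β :=
  match p.elt with
  | .inl y => σ y
  | .inr x => (x : β)

def equivSum : ExtP σ G ≃ α ⊕ {x : β // x ∉ G} where
  toFun := elt
  invFun := mk
  left_inv _ := rfl
  right_inv _ := rfl

instance [Finite α] [Finite β] : Finite (ExtP σ G) := by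
  have := Fintype.ofFinite α
  have := Fintype.ofFinite β
  exact Finite.of_equiv _ (equivSum (σ := σ) (G := G)).symm

end ExtP
/-! ### Infrastructure: chains and the rank function -/

section Infra

variable [PartialOrder α] [Finite α]

set_option linter.unusedSectionVars false

/-- A maximal chain within a subset `S`. -/
def MaxChainIn (S : Set α) (t : Finset α) : Prop :=
  (t : Set α) ⊆ S ∧ IsChain (· ≤ ·) (t : Set α) ∧
    ∀ u : Finset α, (u : Set α) ⊆ S → IsChain (· ≤ ·) (u : Set α) → t ⊆ u → t = u

theorem exists_maxChainIn (S : Set α) (s : Finset α) (hsub : (s : Set α) ⊆ S)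
    (hc : IsChain (· ≤ ·) (s : Set α)) : ∃ t, s ⊆ t ∧ MaxChainIn S t := by
  have : Fintype α := Fintype.ofFinite α
  classical
  set T : Finset (Finset α) :=
    Finset.univ.filter (fun t => (t : Set α) ⊆ S ∧ IsChain (· ≤ ·) (t : Set α) ∧ s ⊆ t)
    with hT
  have hsT : s ∈ T := by simp [hT, hsub, hc]
  obtain ⟨t, htT, hmax⟩ := T.exists_max_image Finset.card ⟨s, hsT⟩
  simp only [hT, Finset.mem_filter, Finset.mem_univ, true_and] at htT
  refine ⟨t, htT.2.2, htT.1, htT.2.1, fun u hu1 hu2 htu => ?_⟩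
  have huT : u ∈ T := by
    simp only [hT, Finset.mem_filter, Finset.mem_univ, true_and]
    exact ⟨hu1, hu2, htT.2.2.trans htu⟩
  exact Finset.eq_of_subset_of_card_le htu (hmax u huT)

/-- A nonempty finite chain has a greatest element. -/
theorem chain_exists_top {s : Finset α} (hne : s.Nonempty)
    (hc : IsChain (· ≤ ·) (s : Set α)) : ∃ m ∈ s, ∀ z ∈ s, z ≤ m := by
  obtain ⟨m, hm, hmax⟩ := s.exists_maximal hne
  refine ⟨m, hm, fun z hz => ?_⟩
  rcases eq_or_ne z m with rfl | hzm
  · exact le_rfl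
  · rcases hc hz hm hzm with h | h
    · exact h
    · exact hmax hz h

/-- A nonempty finite chain has a least element. -/
theorem chain_exists_bot {s : Finset α} (hne : s.Nonempty)
    (hc : IsChain (· ≤ ·) (s : Set α)) : ∃ m ∈ s, ∀ z ∈ s, m ≤ z := by
  obtain ⟨m, hm, hmin⟩ := s.exists_minimal hne
  refine ⟨m, hm, fun z hz => ?_⟩
  rcases eq_or_ne z m with rfl | hzm
  · exact le_rfl
  · rcases hc hz hm hzm with h | h
    · exact hmin hz h
    · exact h

theorem rho_set_def (x : α) : rho x = sSup {k : ℕ | ∃ s : Finset α,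
    IsChain (· ≤ ·) (s : Set α) ∧ (s : Set α) ⊆ Set.Iic x ∧ s.card = k + 1} := rfl

theorem rho_bddAbove (x : α) : BddAbove {k : ℕ | ∃ s : Finset α,
    IsChain (· ≤ ·) (s : Set α) ∧ (s : Set α) ⊆ Set.Iic x ∧ s.card = k + 1} := by
  have : Fintype α := Fintype.ofFinite α
  refine ⟨Fintype.card α, fun k ⟨s, _, _, hcard⟩ => ?_⟩
  have := s.card_le_univ
  omega

theorem rho_mem_zero (x : α) : 0 ∈ {k : ℕ | ∃ s : Finset α,
    IsChain (· ≤ ·) (s : Set α) ∧ (s : Set α) ⊆ Set.Iic x ∧ s.card = k + 1} := by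
  refine ⟨{x}, ?_, ?_, by simp⟩
  · simp [IsChain]
  · simp

theorem le_rho {x : α} {k : ℕ} (s : Finset α) (hc : IsChain (· ≤ ·) (s : Set α))
    (hsub : (s : Set α) ⊆ Set.Iic x) (hcard : s.card = k + 1) : k ≤ rho x :=
  le_csSup (rho_bddAbove x) ⟨s, hc, hsub, hcard⟩

theorem chain_card_le_rho {x : α} (s : Finset α) (hc : IsChain (· ≤ ·) (s : Set α))
    (hsub : (s : Set α) ⊆ Set.Iic x) : s.card ≤ rho x + 1 := by
  rcases Nat.eq_zero_or_pos s.card with h | h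
  · omega
  · obtain ⟨k, hk⟩ : ∃ k, s.card = k + 1 := ⟨s.card - 1, by omega⟩
    have := le_rho s hc hsub hk
    omega

/-- There is a chain of cardinality `rho x + 1` in `Iic x` containing `x`. -/
theorem exists_rho_chain (x : α) : ∃ s : Finset α, IsChain (· ≤ ·) (s : Set α) ∧
    (s : Set α) ⊆ Set.Iic x ∧ s.card = rho x + 1 ∧ x ∈ s ∧ ∀ z ∈ s, z ≤ x := by
  have hmem := Nat.sSup_mem (Set.nonempty_of_mem (rho_mem_zero x)) (rho_bddAbove x)
  rw [← rho_set_def] at hmem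
  obtain ⟨s, hc, hsub, hcard⟩ := hmem
  have hle : ∀ z ∈ s, z ≤ x := fun z hz => hsub (by exact_mod_cast hz)
  by_cases hx : x ∈ s
  · exact ⟨s, hc, hsub, hcard, hx, hle⟩
  · have hc' : IsChain (· ≤ ·) ((insert x s : Finset α) : Set α) := by
      rw [Finset.coe_insert]
      exact hc.insert (fun b hb _ => Or.inr (hsub hb))
    have hsub' : ((insert x s : Finset α) : Set α) ⊆ Set.Iic x := by
      rw [Finset.coe_insert]
      exact Set.insert_subset le_rfl hsub
    have hcard' := chain_card_le_rho (insert x s) hc' hsub'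
    rw [Finset.card_insert_of_notMem hx, hcard] at hcard'
    omega

theorem rho_mono : Monotone (rho (α := α)) := by
  intro y x hyx
  obtain ⟨s, hc, hsub, hcard, _, _⟩ := exists_rho_chain y
  have := le_rho s hc (hsub.trans (Set.Iic_subset_Iic.mpr hyx)) hcard
  exact this

theorem rho_strictMono {y x : α} (h : y < x) : rho y < rho x := by
  obtain ⟨s, hc, hsub, hcard, _, hle⟩ := exists_rho_chain y
  have hx : x ∉ s := fun hx => absurd (hle x hx) h.not_ge
  have hc' : IsChain (· ≤ ·) ((insert x s : Finset α) : Set α) := by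
    rw [Finset.coe_insert]
    exact hc.insert (fun b hb _ => Or.inr ((hsub hb).trans h.le))
  have hsub' : ((insert x s : Finset α) : Set α) ⊆ Set.Iic x := by
    rw [Finset.coe_insert]
    refine Set.insert_subset le_rfl (hsub.trans (Set.Iic_subset_Iic.mpr h.le))
  have := le_rho (insert x s) hc' hsub' (by rw [Finset.card_insert_of_notMem hx, hcard])
  omega

theorem rho_bot [OrderBot α] : rho (⊥ : α) = 0 := by
  obtain ⟨s, hc, hsub, hcard, hmem, hle⟩ := exists_rho_chain (⊥ : α)
  have : s ⊆ {⊥} := fun z hz => by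
    simp only [Finset.mem_singleton]
    exact le_bot_iff.mp (hle z hz)
  have := Finset.card_le_card this
  simp only [Finset.card_singleton] at this
  omega

theorem rho_eq_zero_of_min {x : α} (h : ∀ z, z ≤ x → z = x) : rho x = 0 := by
  obtain ⟨s, hc, hsub, hcard, hmem, hle⟩ := exists_rho_chain x
  have : s ⊆ {x} := fun z hz => by
    simp only [Finset.mem_singleton]; exact h z (hle z hz)
  have := Finset.card_le_card this
  simp only [Finset.card_singleton] at this
  omega

end Infra

section Graded

variable [PartialOrder α] [Finite α]

set_option linter.unusedSectionVars false

theorem MaxChainIn.mem_self {S : Set α} {c : Finset α} (hc : MaxChainIn S c) {z : α}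
    (hz : z ∈ S) (hcomp : ∀ w ∈ c, w ≤ z ∨ z ≤ w) : z ∈ c := by
  have hch : IsChain (· ≤ ·) ((insert z c : Finset α) : Set α) := by
    rw [Finset.coe_insert]
    exact hc.2.1.insert (fun b hb _ => (hcomp b hb).symm)
  have hsub : ((insert z c : Finset α) : Set α) ⊆ S := by
    rw [Finset.coe_insert]
    exact Set.insert_subset hz hc.1
  have := hc.2.2 (insert z c) hsub hch (Finset.subset_insert z c)
  rw [this]
  exact Finset.mem_insert_self z c

theorem MaxChainIn.glue {S T U : Set α} {x : α}
    (hS : S ⊆ Set.Iic x) (hT : T ⊆ Set.Ici x)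
    (hSU : ∀ z ∈ U, z ≤ x → z ∈ S) (hTU : ∀ z ∈ U, x ≤ z → z ∈ T)
    (hSsub : S ⊆ U) (hTsub : T ⊆ U) (hxS : x ∈ S) (hxT : x ∈ T)
    {c d : Finset α} (hc : MaxChainIn S c) (hd : MaxChainIn T d) :
    MaxChainIn U (c ∪ d) ∧ c.card + d.card = (c ∪ d).card + 1 := by
  have hcx : ∀ w ∈ c, w ≤ x := fun w hw => hS (hc.1 (by exact_mod_cast hw))
  have hdx : ∀ w ∈ d, x ≤ w := fun w hw => hT (hd.1 (by exact_mod_cast hw))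
  have hxc : x ∈ c := hc.mem_self hxS (fun w hw => Or.inl (hcx w hw))
  have hxd : x ∈ d := hd.mem_self hxT (fun w hw => Or.inr (hdx w hw))
  have hinter : c ∩ d = {x} := by
    ext z
    simp only [Finset.mem_inter, Finset.mem_singleton]
    constructor
    · rintro ⟨h1, h2⟩
      exact le_antisymm (hcx z h1) (hdx z h2)
    · rintro rfl
      exact ⟨hxc, hxd⟩
  have hchain : IsChain (· ≤ ·) ((c ∪ d : Finset α) : Set α) := by
    intro z hz w hw hne
    rw [Finset.coe_union] at hz hw
    rcases hz with hz | hz <;> rcases hw with hw | hw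
    · exact hc.2.1 hz hw hne
    · exact Or.inl ((hcx z hz).trans (hdx w hw))
    · exact Or.inr ((hcx w hw).trans (hdx z hz))
    · exact hd.2.1 hz hw hne
  have hsub : ((c ∪ d : Finset α) : Set α) ⊆ U := by
    rw [Finset.coe_union]
    exact Set.union_subset (hc.1.trans hSsub) (hd.1.trans hTsub)
  have hmax : ∀ u : Finset α, (u : Set α) ⊆ U → IsChain (· ≤ ·) (u : Set α) →
      c ∪ d ⊆ u → c ∪ d = u := by
    intro u hu1 hu2 hsub'
    have hxu : x ∈ u := hsub' (Finset.mem_union_left d hxc)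
    refine Finset.Subset.antisymm hsub' (fun z hz => ?_)
    have hcomp : z ≤ x ∨ x ≤ z := by
      rcases eq_or_ne z x with rfl | hne
      · exact Or.inl le_rfl
      · exact hu2 (by exact_mod_cast hz) (by exact_mod_cast hxu) hne
    rcases hcomp with hle | hge
    · -- z goes into the lower part
      have hc' := hc.2.2 (u.filter (fun w => w ≤ x)) ?_ ?_ ?_
      · rw [Finset.mem_union]
        left
        rw [hc']
        simp only [Finset.mem_filter]
        exact ⟨hz, hle⟩
      · intro w hw
        simp only [Finset.coe_filter, Set.mem_setOf_eq] at hw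
        exact hSU w (hu1 hw.1) hw.2
      · refine hu2.mono ?_
        intro w hw
        simp only [Finset.coe_filter, Set.mem_setOf_eq] at hw
        exact hw.1
      · intro w hw
        simp only [Finset.mem_filter]
        exact ⟨hsub' (Finset.mem_union_left d hw), hcx w hw⟩
    · have hd' := hd.2.2 (u.filter (fun w => x ≤ w)) ?_ ?_ ?_
      · rw [Finset.mem_union]
        right
        rw [hd']
        simp only [Finset.mem_filter]
        exact ⟨hz, hge⟩
      · intro w hw
        simp only [Finset.coe_filter, Set.mem_setOf_eq] at hw
        exact hTU w (hu1 hw.1) hw.2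
      · refine hu2.mono ?_
        intro w hw
        simp only [Finset.coe_filter, Set.mem_setOf_eq] at hw
        exact hw.1
      · intro w hw
        simp only [Finset.mem_filter]
        exact ⟨hsub' (Finset.mem_union_right c hw), hdx w hw⟩
  refine ⟨⟨hsub, hchain, hmax⟩, ?_⟩
  have := Finset.card_union_add_card_inter c d
  rw [hinter] at this
  simp only [Finset.card_singleton] at this
  omega

variable {n : ℕ}

theorem MaxChainIn.card_univ (hg : IsGradedOfRank α n) {c : Finset α}
    (hc : MaxChainIn Set.univ c) : c.card = n + 1 :=
  hg c hc.1 hc.2.1 hc.2.2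

theorem chain_card_le_of_graded (hg : IsGradedOfRank α n) {s : Finset α}
    (hc : IsChain (· ≤ ·) (s : Set α)) : s.card ≤ n + 1 := by
  obtain ⟨t, hst, ht⟩ := exists_maxChainIn Set.univ s (Set.subset_univ _) hc
  have := ht.card_univ hg
  have := Finset.card_le_card hst
  omega

theorem rho_le_of_graded (hg : IsGradedOfRank α n) (x : α) : rho x ≤ n := by
  obtain ⟨s, hc, _, hcard, _, _⟩ := exists_rho_chain x
  have := chain_card_le_of_graded hg hc
  omega

theorem rho_top_of_graded (hg : IsGradedOfRank α n) {t : α} (ht : ∀ z, z ≤ t) :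
    rho t = n := by
  obtain ⟨c, _, hc⟩ := exists_maxChainIn (Set.univ : Set α) (∅ : Finset α) (by simp) (by simp [IsChain])
  have hcard := hc.card_univ hg
  have hsub : (c : Set α) ⊆ Set.Iic t := fun z _ => ht z
  have := chain_card_le_rho c hc.2.1 hsub
  have := rho_le_of_graded hg t
  have := le_rho c hc.2.1 hsub (by omega : c.card = n + 1)
  omega

theorem maxChainIn_Iic_card (hg : IsGradedOfRank α n) {x : α} {c : Finset α}
    (hc : MaxChainIn (Set.Iic x) c) : c.card = rho x + 1 := by
  obtain ⟨d, _, hd⟩ := exists_maxChainIn (Set.Ici x) {x} (by simp) (by simp [IsChain])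
  have key : ∀ c' : Finset α, MaxChainIn (Set.Iic x) c' → c'.card + d.card = n + 2 := by
    intro c' hc'
    obtain ⟨hu, hcard⟩ := MaxChainIn.glue (S := Set.Iic x) (T := Set.Ici x) (U := Set.univ)
      subset_rfl subset_rfl (fun z _ hz => hz) (fun z _ hz => hz)
      (Set.subset_univ _) (Set.subset_univ _) Set.self_mem_Iic Set.self_mem_Ici hc' hd
    have := hu.card_univ hg
    omega
  obtain ⟨s, hch, hsub, hcard, _, _⟩ := exists_rho_chain x
  obtain ⟨c₀, hsc, hc₀⟩ := exists_maxChainIn (Set.Iic x) s hsub hch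
  have h1 : c₀.card ≤ rho x + 1 := chain_card_le_rho c₀ hc₀.2.1 hc₀.1
  have h2 : rho x + 1 ≤ c₀.card := hcard ▸ Finset.card_le_card hsc
  have := key c₀ hc₀
  have := key c hc
  omega

theorem maxChainIn_Ici_card (hg : IsGradedOfRank α n) {x : α} {d : Finset α}
    (hd : MaxChainIn (Set.Ici x) d) : d.card + rho x = n + 1 := by
  obtain ⟨c, _, hc⟩ := exists_maxChainIn (Set.Iic x) {x} (by simp) (by simp [IsChain])
  obtain ⟨hu, hcard⟩ := MaxChainIn.glue (S := Set.Iic x) (T := Set.Ici x) (U := Set.univ)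
    subset_rfl subset_rfl (fun z _ hz => hz) (fun z _ hz => hz)
    (Set.subset_univ _) (Set.subset_univ _) Set.self_mem_Iic Set.self_mem_Ici hc hd
  have := hu.card_univ hg
  have := maxChainIn_Iic_card hg hc
  omega

theorem maxChainIn_Icc_card (hg : IsGradedOfRank α n) {x y : α} (hxy : x ≤ y)
    {c : Finset α} (hc : MaxChainIn (Set.Icc x y) c) : c.card + rho x = rho y + 1 := by
  obtain ⟨c1, _, hc1⟩ := exists_maxChainIn (Set.Iic x) {x} (by simp) (by simp [IsChain])
  obtain ⟨hu, hcard⟩ := MaxChainIn.glue (S := Set.Iic x) (T := Set.Icc x y) (U := Set.Iic y)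
    subset_rfl (fun z hz => hz.1) (fun z hz h => h) (fun z hz h => ⟨h, hz⟩)
    (Set.Iic_subset_Iic.mpr hxy) (fun z hz => hz.2) Set.self_mem_Iic ⟨le_rfl, hxy⟩ hc1 hc
  have h1 := maxChainIn_Iic_card hg hu
  have h2 := maxChainIn_Iic_card hg hc1
  omega

theorem rho_covBy (hg : IsGradedOfRank α n) {x y : α} (h : x ⋖ y) :
    rho y = rho x + 1 := by
  have hIcc : Set.Icc x y = {x, y} := by
    ext z
    simp only [Set.mem_Icc, Set.mem_insert_iff, Set.mem_singleton_iff]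
    constructor
    · rintro ⟨h1, h2⟩
      rcases eq_or_lt_of_le h1 with rfl | hlt
      · exact Or.inl rfl
      · rcases eq_or_lt_of_le h2 with rfl | hlt2
        · exact Or.inr rfl
        · exact absurd hlt2 (h.2 hlt)
    · rintro (rfl | rfl)
      · exact ⟨le_rfl, h.1.le⟩
      · exact ⟨h.1.le, le_rfl⟩
  have hmc : MaxChainIn (Set.Icc x y) {x, y} := by
    refine ⟨by rw [Finset.coe_insert, Finset.coe_singleton, hIcc], ?_, ?_⟩
    · intro a ha b hb hne
      simp only [Finset.coe_insert, Finset.coe_singleton, Set.mem_insert_iff,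
        Set.mem_singleton_iff] at ha hb
      rcases ha with rfl | rfl <;> rcases hb with rfl | rfl <;>
        first | exact absurd rfl hne | exact Or.inl h.1.le | exact Or.inr h.1.le
    · intro u hu1 _ hsub
      refine Finset.Subset.antisymm hsub (fun z hz => ?_)
      have := hu1 (by exact_mod_cast hz)
      rw [hIcc] at this
      simpa using this
  have hcard : ({x, y} : Finset α).card = 2 := Finset.card_pair h.ne
  have := maxChainIn_Icc_card hg h.1.le hmc
  omega

theorem covBy_of_rho_succ {x y : α} (h : x < y) (hr : rho y = rho x + 1) : x ⋖ y := by
  refine ⟨h, fun w hw1 hw2 => ?_⟩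
  have := rho_strictMono hw1
  have := rho_strictMono hw2
  omega

theorem exists_covBy_le (hg : IsGradedOfRank α n) {x y : α} (h : x < y) :
    ∃ z, x ≤ z ∧ z ⋖ y := by
  have hxyc : IsChain (· ≤ ·) (({x, y} : Finset α) : Set α) := by
    intro a ha b hb hne
    simp only [Finset.coe_insert, Finset.coe_singleton, Set.mem_insert_iff,
      Set.mem_singleton_iff] at ha hb
    rcases ha with rfl | rfl <;> rcases hb with rfl | rfl <;>
      first | exact absurd rfl hne | exact Or.inl h.le | exact Or.inr h.le
  obtain ⟨c, hsub0, hc⟩ := exists_maxChainIn (Set.Icc x y) {x, y}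
    (by intro z hz
        simp only [Finset.coe_insert, Finset.coe_singleton, Set.mem_insert_iff,
          Set.mem_singleton_iff] at hz
        rcases hz with rfl | rfl
        · exact ⟨le_rfl, h.le⟩
        · exact ⟨h.le, le_rfl⟩) hxyc
  have hyc : y ∈ c := hsub0 (by simp)
  have hxc : x ∈ c := hsub0 (by simp)
  have hne : (c.erase y).Nonempty := ⟨x, Finset.mem_erase.mpr ⟨h.ne, hxc⟩⟩
  have hcec : IsChain (· ≤ ·) ((c.erase y : Finset α) : Set α) :=
    hc.2.1.mono (by exact_mod_cast Finset.erase_subset y c)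
  obtain ⟨m, hm, hmtop⟩ := chain_exists_top hne hcec
  have hmc : m ∈ c := Finset.mem_of_mem_erase hm
  have hmy : m ≠ y := (Finset.mem_erase.mp hm).1
  have hmley : m ≤ y := (hc.1 (by exact_mod_cast hmc)).2
  have hmlty : m < y := lt_of_le_of_ne hmley hmy
  have hxm : x ≤ m := hmtop x (Finset.mem_erase.mpr ⟨h.ne, hxc⟩)
  refine ⟨m, hxm, hmlty, fun w hw1 hw2 => ?_⟩
  have hwc : w ∉ c := by
    intro hwc
    have hwy : w ≠ y := hw2.ne
    have := hmtop w (Finset.mem_erase.mpr ⟨hwy, hwc⟩)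
    exact absurd hw1 this.not_gt
  have hch : IsChain (· ≤ ·) ((insert w c : Finset α) : Set α) := by
    rw [Finset.coe_insert]
    refine hc.2.1.insert (fun b hb _ => ?_)
    have hbc : b ∈ c := by exact_mod_cast hb
    rcases eq_or_ne b y with rfl | hby
    · exact Or.inl hw2.le
    · exact Or.inr ((hmtop b (Finset.mem_erase.mpr ⟨hby, hbc⟩)).trans hw1.le)
  have hsub : ((insert w c : Finset α) : Set α) ⊆ Set.Icc x y := by
    rw [Finset.coe_insert]
    exact Set.insert_subset ⟨hxm.trans hw1.le, hw2.le⟩ hc.1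
  have := hc.2.2 (insert w c) hsub hch (Finset.subset_insert w c)
  exact hwc (this ▸ Finset.mem_insert_self w c)

/-- In a graded poset there is an element of each rank between two comparable ones. -/
theorem exists_rho_between (hg : IsGradedOfRank α n) :
    ∀ k : ℕ, ∀ x t : α, x ≤ t → ∀ m, rho x ≤ m → m ≤ rho t → rho t - m = k →
    ∃ z, x ≤ z ∧ z ≤ t ∧ rho z = m := by
  intro k
  induction k with
  | zero =>
    intro x t hxt m h1 h2 h3
    exact ⟨t, hxt, le_rfl, by omega⟩
  | succ k ih =>
    intro x t hxt m h1 h2 h3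
    have hlt : x < t := by
      rcases eq_or_lt_of_le hxt with rfl | h
      · omega
      · exact h
    obtain ⟨z, hxz, hzt⟩ := exists_covBy_le hg hlt
    have hrz := rho_covBy hg hzt
    obtain ⟨z', h1', h2', h3'⟩ := ih x z hxz m h1 (by omega) (by omega)
    exact ⟨z', h1', h2'.trans hzt.1.le, h3'⟩

end Graded

section Chi

variable [PartialOrder α] [Finite α]

set_option linter.unusedSectionVars false

theorem finsum_mem_eq (T : Set α) (f : α → ℤ) :
    ∑ᶠ y ∈ T, f y = ∑ y ∈ T.toFinite.toFinset, f y := by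
  conv_lhs => rw [← T.toFinite.coe_toFinset]
  rw [finsum_mem_coe_finset]

theorem chi_count_eq (T : Set α) :
    ∑ᶠ y ∈ T, ((-1 : ℤ) ^ rho y) =
      ({y ∈ T | Even (rho y)}.ncard : ℤ) - {y ∈ T | Odd (rho y)}.ncard := by
  classical
  rw [finsum_mem_eq]
  set t := T.toFinite.toFinset with hts
  rw [← Finset.sum_filter_add_sum_filter_not t (fun y => Even (rho y))]
  have h1 : ∑ y ∈ t.filter (fun y => Even (rho y)), ((-1 : ℤ) ^ rho y) =
      ((t.filter (fun y => Even (rho y))).card : ℤ) := by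
    rw [Finset.sum_congr rfl (fun y hy => ((Finset.mem_filter.mp hy).2).neg_one_pow)]
    simp
  have h2 : ∑ y ∈ t.filter (fun y => ¬Even (rho y)), ((-1 : ℤ) ^ rho y) =
      -((t.filter (fun y => ¬Even (rho y))).card : ℤ) := by
    rw [Finset.sum_congr rfl
      (fun y hy => (Nat.not_even_iff_odd.mp (Finset.mem_filter.mp hy).2).neg_one_pow)]
    simp
  rw [h1, h2]
  have e1 : {y ∈ T | Even (rho y)} = ↑(t.filter (fun y => Even (rho y))) := by
    ext y
    simp [hts, Set.Finite.mem_toFinset]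
  have e2 : {y ∈ T | Odd (rho y)} = ↑(t.filter (fun y => ¬Even (rho y))) := by
    ext y
    constructor
    · rintro ⟨hyT, hodd⟩
      exact Finset.mem_coe.mpr (Finset.mem_filter.mpr
        ⟨T.toFinite.mem_toFinset.mpr hyT, Nat.not_even_iff_odd.mpr hodd⟩)
    · intro hy
      obtain ⟨h1, h2⟩ := Finset.mem_filter.mp (Finset.mem_coe.mp hy)
      exact ⟨T.toFinite.mem_toFinset.mp h1, Nat.not_even_iff_odd.mp h2⟩
  rw [e1, e2, Set.ncard_coe_finset, Set.ncard_coe_finset]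
  ring

theorem balanced_chi_iff (T : Set α) :
    ({y ∈ T | Even (rho y)}.ncard = {y ∈ T | Odd (rho y)}.ncard) ↔
      ∑ᶠ y ∈ T, ((-1 : ℤ) ^ rho y) = 0 := by
  rw [chi_count_eq]
  omega

theorem chi_of_rho_const {T : Set α} {m : ℕ} (h : ∀ y ∈ T, rho y = m) :
    ∑ᶠ y ∈ T, ((-1 : ℤ) ^ rho y) = (T.ncard : ℤ) * (-1) ^ m := by
  rw [finsum_mem_eq]
  rw [Finset.sum_congr rfl (fun y hy => by
    rw [h y (T.toFinite.mem_toFinset.mp hy)])]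
  rw [Finset.sum_const, nsmul_eq_mul]
  have hn : T.ncard = T.toFinite.toFinset.card := by
    have := Set.ncard_coe_finset T.toFinite.toFinset
    rw [T.toFinite.coe_toFinset] at this
    omega
  rw [hn]

theorem chi_Icc_zero (hbal : BalancedIntervalsIn (Set.univ : Set α)) {x z : α}
    (h : x < z) : ∑ᶠ y ∈ Set.Icc x z, ((-1 : ℤ) ^ rho y) = 0 :=
  (balanced_chi_iff _).mp (hbal x trivial z trivial h)

theorem Icc_eq_Ioo_union_pair {x z : α} (h : x < z) :
    Set.Icc x z = Set.Ioo x z ∪ {x, z} := by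
  ext y
  simp only [Set.mem_Icc, Set.mem_union, Set.mem_Ioo, Set.mem_insert_iff,
    Set.mem_singleton_iff]
  constructor
  · rintro ⟨h1, h2⟩
    rcases eq_or_lt_of_le h1 with rfl | h1'
    · exact Or.inr (Or.inl rfl)
    · rcases eq_or_lt_of_le h2 with rfl | h2'
      · exact Or.inr (Or.inr rfl)
      · exact Or.inl ⟨h1', h2'⟩
  · rintro (⟨h1, h2⟩ | rfl | rfl)
    · exact ⟨h1.le, h2.le⟩
    · exact ⟨le_rfl, h.le⟩
    · exact ⟨h.le, le_rfl⟩

theorem chi_Icc_split {x z : α} (h : x < z) :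
    ∑ᶠ y ∈ Set.Icc x z, ((-1 : ℤ) ^ rho y) =
      (∑ᶠ y ∈ Set.Ioo x z, ((-1 : ℤ) ^ rho y)) + (-1) ^ rho x + (-1) ^ rho z := by
  rw [Icc_eq_Ioo_union_pair h, finsum_mem_union, finsum_mem_pair h.ne]
  · ring
  · rw [Set.disjoint_left]
    rintro y ⟨h1, h2⟩ (rfl | rfl)
    · exact lt_irrefl _ h1
    · exact lt_irrefl _ h2
  · exact Set.toFinite _
  · exact Set.toFinite _

theorem diamond_ncard (hbal : BalancedIntervalsIn (Set.univ : Set α)) {x z : α}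
    (hxz : x < z) (hr : rho z = rho x + 2) : (Set.Ioo x z).ncard = 2 := by
  have hrho : ∀ y ∈ Set.Ioo x z, rho y = rho x + 1 := by
    rintro y ⟨h1, h2⟩
    have := rho_strictMono h1
    have := rho_strictMono h2
    omega
  have h0 := chi_Icc_zero hbal hxz
  rw [chi_Icc_split hxz, chi_of_rho_const hrho, hr] at h0
  rcases Nat.even_or_odd (rho x) with he | he
  · rw [he.neg_one_pow, (he.add_one).neg_one_pow, Even.neg_one_pow (by
      rcases he with ⟨k, hk⟩; exact ⟨k + 1, by omega⟩)] at h0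
    omega
  · rw [he.neg_one_pow, Even.neg_one_pow (he.add_one), Odd.neg_one_pow (by
      rcases he with ⟨k, hk⟩; exact ⟨k + 1, by omega⟩)] at h0
    omega

theorem diamond_covBy {x z : α} (hr : rho z = rho x + 2) {w : α}
    (hw : w ∈ Set.Ioo x z) : x ⋖ w ∧ w ⋖ z := by
  obtain ⟨h1, h2⟩ := hw
  have e1 := rho_strictMono h1
  have e2 := rho_strictMono h2
  exact ⟨covBy_of_rho_succ h1 (by omega), covBy_of_rho_succ h2 (by omega)⟩

theorem exists_two_covBy {n : ℕ} (hg : IsGradedOfRank α n)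
    (hbal : BalancedIntervalsIn (Set.univ : Set α)) {x t : α} (ht : ∀ z, z ≤ t)
    (h2 : rho x + 2 ≤ n) : ∃ w₁ w₂, x ⋖ w₁ ∧ x ⋖ w₂ ∧ w₁ ≠ w₂ := by
  have hrt : rho t = n := rho_top_of_graded hg ht
  obtain ⟨z, hxz, hzt, hrz⟩ := exists_rho_between hg (rho t - (rho x + 2)) x t (ht x)
    (rho x + 2) (by omega) (by omega) rfl
  have hlt : x < z := lt_of_le_of_ne hxz (by rintro rfl; omega)
  have hcard := diamond_ncard hbal hlt hrz
  obtain ⟨w₁, w₂, hne, hset⟩ := Set.ncard_eq_two.mp hcard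
  have hw₁ : w₁ ∈ Set.Ioo x z := by rw [hset]; simp
  have hw₂ : w₂ ∈ Set.Ioo x z := by rw [hset]; simp
  exact ⟨w₁, w₂, (diamond_covBy hrz hw₁).1, (diamond_covBy hrz hw₂).1, hne⟩

end Chi

section Transfer

variable [PartialOrder α] [Finite α] [PartialOrder β] [Finite β]

set_option linter.unusedSectionVars false

/-- Rank transfers along an order-embedding whose image is downward closed below the
given element. -/
theorem rho_emb {e : α → β} (he : ∀ {u v : α}, u ≤ v ↔ e u ≤ e v) {a : α}
    (hdc : ∀ b, b ≤ e a → ∃ u, u ≤ a ∧ e u = b) : rho (e a) = rho a := by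
  classical
  have hinj : Function.Injective e := fun u v h =>
    le_antisymm (he.mpr h.le) (he.mpr h.ge)
  apply le_antisymm
  · -- pull back a chain
    obtain ⟨s, hc, hsub, hcard, _, _⟩ := exists_rho_chain (e a)
    set g : β → α := fun b => if h : ∃ u, u ≤ a ∧ e u = b then h.choose else a with hg
    have hgspec : ∀ b ∈ s, g b ≤ a ∧ e (g b) = b := by
      intro b hb
      have hba : b ≤ e a := hsub (by exact_mod_cast hb)
      have hex := hdc b hba
      rw [hg]
      simp only [dif_pos hex]
      exact hex.choose_spec
    have hinj2 : Set.InjOn g s := by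
      intro b hb b' hb' hbb
      have := (hgspec b hb).2
      have := (hgspec b' hb').2
      rw [← (hgspec b hb).2, ← (hgspec b' hb').2, hbb]
    have hcard2 : (s.image g).card = rho (e a) + 1 := by
      rw [Finset.card_image_of_injOn (by exact_mod_cast hinj2), hcard]
    have hchain : IsChain (· ≤ ·) ((s.image g : Finset α) : Set α) := by
      intro u hu v hv huv
      rw [Finset.coe_image] at hu hv
      obtain ⟨b, hb, rfl⟩ := hu
      obtain ⟨b', hb', rfl⟩ := hv
      have hbb : b ≠ b' := fun h => huv (by rw [h])
      rcases hc hb hb' hbb with h | h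
      · exact Or.inl (he.mpr (by rw [(hgspec b (by exact_mod_cast hb)).2,
          (hgspec b' (by exact_mod_cast hb')).2]; exact h))
      · exact Or.inr (he.mpr (by rw [(hgspec b (by exact_mod_cast hb)).2,
          (hgspec b' (by exact_mod_cast hb')).2]; exact h))
    have hsub2 : ((s.image g : Finset α) : Set α) ⊆ Set.Iic a := by
      intro u hu
      rw [Finset.coe_image] at hu
      obtain ⟨b, hb, rfl⟩ := hu
      exact (hgspec b (by exact_mod_cast hb)).1
    exact le_rho _ hchain hsub2 hcard2
  · -- push a chain forward
    obtain ⟨s, hc, hsub, hcard, _, _⟩ := exists_rho_chain a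
    have hcard2 : (s.image e).card = rho a + 1 := by
      rw [Finset.card_image_of_injective _ hinj, hcard]
    have hchain : IsChain (· ≤ ·) ((s.image e : Finset β) : Set β) := by
      intro u hu v hv huv
      rw [Finset.coe_image] at hu hv
      obtain ⟨b, hb, rfl⟩ := hu
      obtain ⟨b', hb', rfl⟩ := hv
      have hbb : b ≠ b' := fun h => huv (by rw [h])
      rcases hc hb hb' hbb with h | h
      · exact Or.inl (he.mp h)
      · exact Or.inr (he.mp h)
    have hsub2 : ((s.image e : Finset β) : Set β) ⊆ Set.Iic (e a) := by
      intro u hu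
      rw [Finset.coe_image] at hu
      obtain ⟨b, hb, rfl⟩ := hu
      exact he.mp (hsub hb)
    exact le_rho _ hchain hsub2 hcard2

theorem rho_orderIso (e : α ≃o β) (a : α) : rho (e a) = rho a :=
  rho_emb (fun {u v} => (e.le_iff_le).symm)
    (fun b hb => ⟨e.symm b, by
      constructor
      · rw [← e.le_iff_le]
        simpa using hb
      · simp⟩)

end Transfer

section SFSLemmas

variable [PartialOrder α] [Finite α] [PartialOrder β] [Finite β]

set_option linter.unusedSectionVars false

theorem mem_boundary_iff {n : ℕ} {y : α} : y ∈ boundary α n ↔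
    ∃ x, rho x = n - 1 ∧ {z | x ⋖ z}.ncard = 1 ∧ y ≤ x := by
  simp only [boundary, boundaryIn, Set.mem_setOf_eq, Set.mem_univ, true_and, Set.sep_univ]

theorem boundary_lower {n : ℕ} {y y' : α} (hy : y ∈ boundary α n) (h : y' ≤ y) :
    y' ∈ boundary α n := by
  rw [mem_boundary_iff] at hy ⊢
  obtain ⟨x, h1, h2, h3⟩ := hy
  exact ⟨x, h1, h2, h.trans h3⟩

/-- The fundamental χ-transfer along a strong formal subdivision. -/
theorem sfs_sum_fiber (σ : α → β) (hσ : IsSFS σ) (s : α) (U : Set β) :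
    ∑ᶠ y ∈ {y : α | s ≤ y ∧ σ y ∈ U}, ((-1 : ℤ) ^ rho y) =
      ∑ᶠ x ∈ {x : β | σ s ≤ x ∧ x ∈ U}, ((-1 : ℤ) ^ rho x) := by
  classical
  have : Fintype α := Fintype.ofFinite α
  have : Fintype β := Fintype.ofFinite β
  set A : Finset α := Finset.univ.filter (fun y => s ≤ y ∧ σ y ∈ U) with hA
  set B : Finset β := Finset.univ.filter (fun x => σ s ≤ x ∧ x ∈ U) with hB
  have eA : {y : α | s ≤ y ∧ σ y ∈ U} = ↑A := by ext y; simp [hA]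
  have eB : {x : β | σ s ≤ x ∧ x ∈ U} = ↑B := by ext x; simp [hB]
  rw [eA, eB, finsum_mem_coe_finset, finsum_mem_coe_finset]
  have hmaps : ∀ y ∈ A, σ y ∈ B := by
    intro y hy
    simp only [hA, Finset.mem_filter, Finset.mem_univ, true_and] at hy
    simp only [hB, Finset.mem_filter, Finset.mem_univ, true_and]
    exact ⟨hσ.1 hy.1, hy.2⟩
  rw [← Finset.sum_fiberwise_of_maps_to hmaps (fun y => ((-1 : ℤ) ^ rho y))]
  refine Finset.sum_congr rfl (fun x hx => ?_)
  simp only [hB, Finset.mem_filter, Finset.mem_univ, true_and] at hx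
  have key := hσ.2.2.2.2 s x hx.1
  have eS : {y' : α | σ y' = x ∧ s ≤ y'} = ↑(A.filter (fun y => σ y = x)) := by
    ext y
    simp only [Set.mem_setOf_eq, Finset.coe_filter, hA, Finset.mem_filter,
      Finset.mem_univ, true_and]
    constructor
    · rintro ⟨h1, h2⟩
      exact ⟨⟨h2, h1 ▸ hx.2⟩, h1⟩
    · rintro ⟨⟨h1, _⟩, h2⟩
      exact ⟨h2, h1⟩
  rw [eS, finsum_mem_coe_finset] at key
  exact key

theorem sfs_chi_Ici (σ : α → β) (hσ : IsSFS σ) (s : α) :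
    ∑ᶠ y ∈ Set.Ici s, ((-1 : ℤ) ^ rho y) =
      ∑ᶠ x ∈ Set.Ici (σ s), ((-1 : ℤ) ^ rho x) := by
  have h1 : Set.Ici s = {y : α | s ≤ y ∧ σ y ∈ Set.univ} := by ext y; simp [Set.mem_Ici]
  have h2 : Set.Ici (σ s) = {x : β | σ s ≤ x ∧ x ∈ Set.univ} := by ext x; simp [Set.mem_Ici]
  rw [h1, h2]
  exact sfs_sum_fiber σ hσ s Set.univ

theorem Ici_corank_one {n : ℕ} (hg : IsGradedOfRank α n) (hn : 1 ≤ n) {x : α}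
    (hx : rho x = n - 1) :
    Set.Ici x = {x} ∪ {z | x ⋖ z} ∧ (∀ z, x ⋖ z → rho z = n) := by
  have hcov : ∀ z, x ⋖ z → rho z = n := by
    intro z hz
    have := rho_covBy hg hz
    omega
  constructor
  · ext y
    simp only [Set.mem_Ici, Set.mem_union, Set.mem_singleton_iff, Set.mem_setOf_eq]
    constructor
    · intro h
      rcases eq_or_lt_of_le h with rfl | hlt
      · exact Or.inl rfl
      · right
        have h1 := rho_strictMono hlt
        have h2 := rho_le_of_graded hg y
        exact covBy_of_rho_succ hlt (by omega)
    · rintro (rfl | h)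
      · exact le_rfl
      · exact h.1.le
  · exact hcov

theorem chi_Ici_corank_one {n : ℕ} (hg : IsGradedOfRank α n) (hn : 1 ≤ n) {x : α}
    (hx : rho x = n - 1) :
    ∑ᶠ y ∈ Set.Ici x, ((-1 : ℤ) ^ rho y) =
      (-1) ^ (n - 1) + ({z : α | x ⋖ z}.ncard : ℤ) * (-1) ^ n := by
  obtain ⟨hIci, hcov⟩ := Ici_corank_one hg hn hx
  rw [hIci, finsum_mem_union, finsum_mem_singleton, hx]
  · exact congrArg (fun t => (-1 : ℤ) ^ (n - 1) + t)
      (chi_of_rho_const (T := {z | x ⋖ z}) (fun z hz => hcov z hz))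
  · rw [Set.disjoint_left]
    rintro y rfl h
    exact lt_irrefl _ h.1
  · exact Set.toFinite _
  · exact Set.toFinite _

theorem chi_Ici_top_rank {n : ℕ} (hg : IsGradedOfRank α n) {x : α} (hx : rho x = n) :
    ∑ᶠ y ∈ Set.Ici x, ((-1 : ℤ) ^ rho y) = (-1) ^ n := by
  have hIci : Set.Ici x = {x} := by
    ext y
    simp only [Set.mem_Ici, Set.mem_singleton_iff]
    constructor
    · intro h
      rcases eq_or_lt_of_le h with rfl | hlt
      · rfl
      · have := rho_strictMono hlt
        have := rho_le_of_graded hg y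
        omega
    · rintro rfl; exact le_rfl
  rw [hIci, finsum_mem_singleton, hx]

/-- The key cover-counting lemma along an SFS between graded posets of the same rank. -/
theorem sfs_cover_count {n : ℕ} (hgα : IsGradedOfRank α n) (hgβ : IsGradedOfRank β n)
    (σ : α → β) (hσ : IsSFS σ) (hn : 1 ≤ n) {x : α} (hx : rho x = n - 1) :
    (rho (σ x) = n - 1 ∧ {z : α | x ⋖ z}.ncard = {z : β | σ x ⋖ z}.ncard) ∨
      (rho (σ x) = n ∧ {z : α | x ⋖ z}.ncard = 2) := by
  have key := sfs_chi_Ici σ hσ x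
  rw [chi_Ici_corank_one hgα hn hx] at key
  have hr1 : n - 1 ≤ rho (σ x) := hx ▸ hσ.2.1 x
  have hr2 : rho (σ x) ≤ n := rho_le_of_graded hgβ (σ x)
  by_cases hcase : rho (σ x) = n
  · right
    refine ⟨hcase, ?_⟩
    rw [chi_Ici_top_rank hgβ hcase] at key
    rcases Nat.even_or_odd n with he | he
    · rw [he.neg_one_pow, Odd.neg_one_pow (by
        rcases he with ⟨k, hk⟩; exact ⟨k - 1, by omega⟩)] at key
      omega
    · rw [he.neg_one_pow, Even.neg_one_pow (by
        rcases he with ⟨k, hk⟩; exact ⟨k, by omega⟩)] at key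
      omega
  · left
    have hcase' : rho (σ x) = n - 1 := by omega
    refine ⟨hcase', ?_⟩
    rw [chi_Ici_corank_one hgβ hn hcase'] at key
    rcases Nat.even_or_odd n with he | he
    · rw [he.neg_one_pow, Odd.neg_one_pow (by
        rcases he with ⟨k, hk⟩; exact ⟨k - 1, by omega⟩)] at key
      omega
    · rw [he.neg_one_pow, Even.neg_one_pow (by
        rcases he with ⟨k, hk⟩; exact ⟨k, by omega⟩)] at key
      omega

/-- `σ⁻¹(∂Γ) = ∂Π` for an SFS between graded posets of the same rank. -/
theorem sfs_boundary_preimage {n : ℕ} (hgα : IsGradedOfRank α n)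
    (hgβ : IsGradedOfRank β n) (σ : α → β) (hσ : IsSFS σ) (hn : 1 ≤ n) :
    σ ⁻¹' boundary β n = boundary α n := by
  ext y
  simp only [Set.mem_preimage]
  rw [mem_boundary_iff, mem_boundary_iff]
  constructor
  · rintro ⟨x', hx'1, hx'2, hx'3⟩
    obtain ⟨y', hy'1, hy'2, hy'3⟩ := hσ.2.2.2.1 y x' hx'3
    rw [hx'1] at hy'3
    rcases sfs_cover_count hgα hgβ σ hσ hn hy'3 with ⟨h1, h2⟩ | ⟨h1, h2⟩
    · refine ⟨y', hy'3, ?_, hy'1⟩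
      rw [h2, hy'2]
      exact hx'2
    · rw [hy'2, hx'1] at h1
      omega
  · rintro ⟨x, hx1, hx2, hx3⟩
    rcases sfs_cover_count hgα hgβ σ hσ hn hx1 with ⟨h1, h2⟩ | ⟨h1, h2⟩
    · exact ⟨σ x, h1, by rw [← h2]; exact hx2, hσ.1 hx3⟩
    · rw [hx2] at h2
      omega

end SFSLemmas

section NearEulerian

set_option linter.unusedSectionVars false

theorem nearEulerian_pack {γ : Type} [PartialOrder γ] [Finite γ] [OrderBot γ] {n : ℕ}
    (hG : IsNearEulerianOfRank γ n) :
    1 ≤ n ∧ IsGradedOfRank γ n ∧ (⊥ : γ) ∈ boundary γ n ∧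
    (∀ z : γ, ∑ᶠ x ∈ Set.Ici z, ((-1 : ℤ) ^ rho x) =
      -(-1 : ℤ) ^ (n + 1) - (if z ∈ boundary γ n then (-1 : ℤ) ^ n else 0)) ∧
    (∀ z ∈ boundary γ n,
      ∑ᶠ x ∈ {x : γ | z ≤ x ∧ x ∈ boundary γ n}, ((-1 : ℤ) ^ rho x) = -(-1 : ℤ) ^ n) := by
  classical
  obtain ⟨Q, instQ, finQ, q0, t0, hQE, ht0, hrq0, hq0t0, ⟨f⟩⟩ := hG
  obtain ⟨⟨b, hb⟩, -, hgQ, hbalQ⟩ := hQE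
  set g : γ → Q := fun z => (f z : Q) with hgdef
  have hgne : ∀ z, g z ≠ q0 ∧ g z ≠ t0 := fun z => (f z).2
  have he : ∀ {u v : γ}, u ≤ v ↔ g u ≤ g v := by
    intro u v
    rw [← f.le_iff_le]
    exact Subtype.coe_le_coe.symm
  have hginj : Function.Injective g := fun u v h =>
    le_antisymm (he.mpr h.le) (he.mpr h.ge)
  have hglt : ∀ {u v : γ}, u < v → g u < g v := fun h =>
    lt_of_le_of_ne (he.mp h.le) (fun hh => h.ne (hginj hh))
  have hgsymm : ∀ (w : Q) (h1 : w ≠ q0) (h2 : w ≠ t0), g (f.symm ⟨w, h1, h2⟩) = w := by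
    intro w h1 h2
    simp [hgdef]
  have hrt0 : rho t0 = n + 1 := rho_top_of_graded hgQ ht0
  have hlttop : ∀ w : Q, w ≠ t0 → w < t0 := fun w hw => lt_of_le_of_ne (ht0 w) hw
  have hrle : ∀ w : Q, w ≠ t0 → rho w ≤ n := by
    intro w hw
    have := rho_strictMono (hlttop w hw)
    omega
  have hq0_not_le : ∀ z : γ, ¬q0 ≤ g z := by
    intro z h
    rcases eq_or_lt_of_le h with heq | hlt
    · exact (hgne z).1 heq.symm
    · have := rho_strictMono hlt
      have := hrle (g z) (hgne z).2
      omega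
  have ht0_not_le : ∀ z : γ, ¬t0 ≤ g z := fun z h => (hgne z).2 (le_antisymm (ht0 _) h)
  have hdcg : ∀ a : γ, ∀ b' ≤ g a, ∃ u, u ≤ a ∧ g u = b' := by
    intro a b' hba
    have hbq : b' ≠ q0 := by rintro rfl; exact hq0_not_le a hba
    have hbt : b' ≠ t0 := by rintro rfl; exact ht0_not_le a hba
    refine ⟨f.symm ⟨b', hbq, hbt⟩, ?_, hgsymm b' hbq hbt⟩
    rw [he, hgsymm b' hbq hbt]
    exact hba
  have hrg : ∀ z, rho (g z) = rho z := fun z => rho_emb (e := g) (fun {u v} => he) (hdcg z)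
  -- the rank is at least one
  have hn : 1 ≤ n := by
    by_contra hcon
    have hn0 : n = 0 := by omega
    have hbq : b = q0 := by
      rcases eq_or_lt_of_le (hb q0) with heq | hlt
      · exact heq
      · have := rho_strictMono hlt
        omega
    have h2 : rho (g ⊥) = 0 := by rw [hrg]; exact rho_bot
    rcases eq_or_lt_of_le (hb (g (⊥ : γ))) with heq | hlt
    · exact (hgne ⊥).1 (heq ▸ hbq ▸ rfl)
    · have := rho_strictMono hlt
      omega
  have hq0lt_t0 : q0 < t0 := hlttop q0 hq0t0
  -- covers of corank-one elements of `γ`, seen in `Q`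
  have hcovQ : ∀ x : γ, rho x = n - 1 → {w : Q | g x ⋖ w} = Set.Ioo (g x) t0 := by
    intro x hx
    have hrgx : rho (g x) = n - 1 := by rw [hrg]; exact hx
    ext w
    simp only [Set.mem_setOf_eq, Set.mem_Ioo]
    constructor
    · intro h
      have hrw := rho_covBy hgQ h
      refine ⟨h.1, hlttop w ?_⟩
      intro hwt
      rw [hwt, hrt0] at hrw
      omega
    · rintro ⟨h1, h2⟩
      have e1 := rho_strictMono h1
      have e2 := rho_strictMono h2
      rw [hrt0] at e2
      exact covBy_of_rho_succ h1 (by omega)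
  have hcount : ∀ x : γ, rho x = n - 1 →
      {z : γ | x ⋖ z}.ncard = if g x < q0 then 1 else 2 := by
    intro x hx
    have hrgx : rho (g x) = n - 1 := by rw [hrg]; exact hx
    have himg : g '' {z : γ | x ⋖ z} = Set.Ioo (g x) t0 \ {q0} := by
      ext w
      simp only [Set.mem_image, Set.mem_setOf_eq, Set.mem_diff, Set.mem_singleton_iff]
      constructor
      · rintro ⟨z, hz, rfl⟩
        have hrz : rho z = n := by
          have h1 := rho_strictMono (hglt hz.1)
          have h2 := hrle (g z) (hgne z).2
          rw [hrg x, hrg z] at h1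
          rw [hrg z] at h2
          omega
        have hcov : g x ⋖ g z := by
          refine covBy_of_rho_succ (lt_of_le_of_ne (he.mp hz.1.le) (fun hh => hz.1.ne (hginj hh))) ?_
          rw [hrg, hrg, hrz, hx]
          omega
        refine ⟨?_, (hgne z).1⟩
        rw [← hcovQ x hx]
        exact hcov
      · rintro ⟨hw, hwq0⟩
        have hcov : g x ⋖ w := by
          have hmem : w ∈ Set.Ioo (g x) t0 := hw
          rw [← hcovQ x hx] at hmem
          exact hmem
        have hwt0 : w ≠ t0 := hw.2.ne
        refine ⟨f.symm ⟨w, hwq0, hwt0⟩, ?_, hgsymm w hwq0 hwt0⟩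
        have hgz := hgsymm w hwq0 hwt0
        constructor
        · refine lt_of_le_of_ne (he.mpr (by rw [hgz]; exact hcov.1.le)) ?_
          intro hh
          exact hcov.1.ne (by rw [hh, hgz])
        · intro v hv1 hv2
          have h1 : g x < g v := by
            refine lt_of_le_of_ne (he.mp hv1.le) (fun hh => hv1.ne (hginj hh))
          have h2 : g v < w := by
            rw [← hgz]
            refine lt_of_le_of_ne (he.mp hv2.le) (fun hh => hv2.ne (hginj hh))
          exact hcov.2 h1 h2
    have hIoo2 : (Set.Ioo (g x) t0).ncard = 2 :=
      diamond_ncard hbalQ (hlttop _ (hgne x).2) (by rw [hrt0, hrgx]; omega)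
    have hcard : {z : γ | x ⋖ z}.ncard = (Set.Ioo (g x) t0 \ {q0}).ncard := by
      rw [← himg, Set.ncard_image_of_injective _ hginj]
    rw [hcard]
    by_cases hc : g x < q0
    · rw [if_pos hc, Set.ncard_diff_singleton_of_mem (Set.mem_Ioo.mpr ⟨hc, hq0lt_t0⟩), hIoo2]
    · rw [if_neg hc, Set.diff_singleton_eq_self (fun hq => hc hq.1), hIoo2]
  -- boundary characterisation
  have hmem_bd : ∀ z : γ, z ∈ boundary γ n ↔ g z < q0 := by
    intro z
    rw [mem_boundary_iff]
    constructor
    · rintro ⟨x, hx1, hx2, hx3⟩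
      have hcx := hcount x hx1
      by_cases hc : g x < q0
      · exact lt_of_le_of_lt (he.mp hx3) hc
      · rw [if_neg hc, hx2] at hcx
        omega
    · intro hlt
      obtain ⟨xQ, hxQ1, hxQ2⟩ := exists_covBy_le hgQ hlt
      have hrxQ : rho xQ = n - 1 := by
        have := rho_covBy hgQ hxQ2
        rw [hrq0] at this
        omega
      have hxQq0 : xQ ≠ q0 := hxQ2.1.ne
      have hxQt0 : xQ ≠ t0 := by
        intro hh
        rw [hh, hrt0] at hrxQ
        omega
      have hgx := hgsymm xQ hxQq0 hxQt0
      have hrx : rho (f.symm ⟨xQ, hxQq0, hxQt0⟩) = n - 1 := by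
        rw [← hrg, hgx]; exact hrxQ
      refine ⟨f.symm ⟨xQ, hxQq0, hxQt0⟩, hrx, ?_, he.mpr (by rw [hgx]; exact hxQ1)⟩
      rw [hcount _ hrx, if_pos (by rw [hgx]; exact hxQ2.1)]
  -- the bottom element is in the boundary
  have hrb : rho b = 0 := rho_eq_zero_of_min (fun z hz => le_antisymm hz (hb z))
  have hbq0 : b ≠ q0 := by intro h; rw [h, hrq0] at hrb; omega
  have hbt0 : b ≠ t0 := by intro h; rw [h, hrt0] at hrb; omega
  have hgbot : g (⊥ : γ) = b := by
    have h1 := hgsymm b hbq0 hbt0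
    have h2 : f.symm ⟨b, hbq0, hbt0⟩ = (⊥ : γ) := by
      have : f.symm ⟨b, hbq0, hbt0⟩ ≤ (⊥ : γ) := he.mpr (by rw [h1]; exact hb _)
      exact le_antisymm this bot_le
    rw [← h2, h1]
  have hbot_bd : (⊥ : γ) ∈ boundary γ n := by
    rw [hmem_bd, hgbot]
    exact lt_of_le_of_ne (hb q0) hbq0
  -- gradedness of γ
  have hgγ : IsGradedOfRank γ n := by
    intro c hsub hchain hmax
    have hcne : c.Nonempty := by
      by_contra h
      rw [Finset.not_nonempty_iff_eq_empty] at h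
      subst h
      have := hmax {⊥} (by simp) (by simp [IsChain]) (by simp)
      exact Finset.singleton_ne_empty (⊥ : γ) this.symm
    obtain ⟨m, hm, hmtop⟩ := chain_exists_top hcne hchain
    have hmmax : ∀ z : γ, ¬m < z := by
      intro z hz
      have hzc : z ∉ c := fun h => absurd (hmtop z h) hz.not_ge
      have hch : IsChain (· ≤ ·) ((insert z c : Finset γ) : Set γ) := by
        rw [Finset.coe_insert]
        exact hchain.insert (fun w hw _ => Or.inr ((hmtop w (by exact_mod_cast hw)).trans hz.le))
      have := hmax (insert z c) (by simp) hch (Finset.subset_insert _ _)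
      exact hzc (this ▸ Finset.mem_insert_self z c)
    have hrm : rho m = n := by
      by_contra hne
      have hlt : rho (g m) + 2 ≤ n + 1 := by
        rw [hrg]
        have := hrle (g m) (hgne m).2
        rw [hrg] at this
        omega
      obtain ⟨w₁, w₂, hc1, hc2, hne12⟩ := exists_two_covBy hgQ hbalQ ht0 hlt
      have hex : ∃ w, g m ⋖ w ∧ w ≠ q0 := by
        by_cases h1 : w₁ = q0
        · exact ⟨w₂, hc2, fun h => hne12 (h1.trans h.symm)⟩
        · exact ⟨w₁, hc1, h1⟩
      obtain ⟨w, hcw, hwq0⟩ := hex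
      have hwt0 : w ≠ t0 := by
        intro hh
        have := rho_covBy hgQ hcw
        rw [hh, hrt0] at this
        omega
      have hgz := hgsymm w hwq0 hwt0
      refine hmmax (f.symm ⟨w, hwq0, hwt0⟩) ?_
      refine lt_of_le_of_ne (he.mpr (by rw [hgz]; exact hcw.1.le)) ?_
      intro hh
      exact hcw.1.ne (by rw [← hgz, ← hh])
    set C := c.image g ∪ {t0} with hC
    have ht0img : t0 ∉ c.image g := by
      simp only [Finset.mem_image, not_exists]
      rintro z ⟨hz, hgz⟩
      exact (hgne z).2 hgz
    have hcardC : C.card = c.card + 1 := by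
      rw [hC, Finset.card_union_of_disjoint (by simp [ht0img]),
        Finset.card_image_of_injective _ hginj]
      simp
    have hchC : IsChain (· ≤ ·) (C : Set Q) := by
      intro u hu v hv huv
      simp only [hC, Finset.coe_union, Finset.coe_image, Finset.coe_singleton,
        Set.mem_union, Set.mem_image, Set.mem_singleton_iff, Finset.mem_coe] at hu hv
      rcases hu with ⟨zu, hzu, rfl⟩ | rfl <;> rcases hv with ⟨zv, hzv, rfl⟩ | rfl
      · rcases hchain (by exact_mod_cast hzu) (by exact_mod_cast hzv)
          (fun h => huv (by rw [h])) with h | h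
        · exact Or.inl (he.mp h)
        · exact Or.inr (he.mp h)
      · exact Or.inl (ht0 _)
      · exact Or.inr (ht0 _)
      · exact absurd rfl huv
    have hmaxC : ∀ u : Finset Q, (u : Set Q) ⊆ Set.univ → IsChain (· ≤ ·) (u : Set Q) →
        C ⊆ u → C = u := by
      intro u _ hu2 hCu
      refine Finset.Subset.antisymm hCu (fun w hw => ?_)
      by_cases hwt : w = t0
      · subst hwt
        simp [hC]
      by_cases hwq : w = q0
      · subst hwq
        exfalso
        have hgmu : g m ∈ u := hCu (by rw [hC]; exact Finset.mem_union_left _ (Finset.mem_image_of_mem g hm))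
        have hne : w ≠ g m := fun h => (hgne m).1 h.symm
        rcases hu2 (by exact_mod_cast hw) (by exact_mod_cast hgmu) hne with h | h
        · exact hq0_not_le m h
        · have := rho_strictMono (lt_of_le_of_ne h (fun hh => hne hh.symm))
          rw [hrg, hrm, hrq0] at this
          omega
      · have hgz := hgsymm w hwq hwt
        set z := f.symm ⟨w, hwq, hwt⟩ with hz
        have hcomp : ∀ v ∈ c, v ≤ z ∨ z ≤ v := by
          intro v hv
          have hgvu : g v ∈ u := hCu (by rw [hC]; exact Finset.mem_union_left _ (Finset.mem_image_of_mem g hv))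
          rcases eq_or_ne (g v) w with hvw | hvw
          · exact Or.inl (he.mpr (by rw [hgz, ← hvw]))
          · rcases hu2 (by exact_mod_cast hgvu) (by exact_mod_cast hw) hvw with h | h
            · exact Or.inl (he.mpr (by rw [hgz]; exact h))
            · exact Or.inr (he.mpr (by rw [hgz]; exact h))
        have hch : IsChain (· ≤ ·) ((insert z c : Finset γ) : Set γ) := by
          rw [Finset.coe_insert]
          exact hchain.insert (fun v hv _ => (hcomp v (by exact_mod_cast hv)).symm)
        have := hmax (insert z c) (by simp) hch (Finset.subset_insert _ _)
        have hzc : z ∈ c := this ▸ Finset.mem_insert_self z c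
        simp only [hC, Finset.mem_union, Finset.mem_image]
        exact Or.inl ⟨z, hzc, hgz⟩
    have := hgQ C (Set.subset_univ _) hchC hmaxC
    omega
  -- the chi computation for upper sets
  have himgsum : ∀ S : Set γ, ∑ᶠ w ∈ g '' S, ((-1 : ℤ) ^ rho w) =
      ∑ᶠ x ∈ S, ((-1 : ℤ) ^ rho x) := by
    intro S
    rw [finsum_mem_image (Set.injOn_of_injective hginj)]
    exact finsum_mem_congr rfl (fun x _ => by rw [hrg])
  have hchiIci : ∀ z : γ, ∑ᶠ x ∈ Set.Ici z, ((-1 : ℤ) ^ rho x) =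
      -(-1 : ℤ) ^ (n + 1) - (if z ∈ boundary γ n then (-1 : ℤ) ^ n else 0) := by
    intro z
    have hzt0 : g z < t0 := hlttop _ (hgne z).2
    have h0 := chi_Icc_zero hbalQ hzt0
    have hIcc : Set.Icc (g z) t0 = Set.Ici (g z) := by
      ext w
      simp [Set.mem_Icc, Set.mem_Ici, ht0 w]
    rw [hIcc] at h0
    by_cases hzbd : z ∈ boundary γ n
    · have hset : Set.Ici (g z) = g '' Set.Ici z ∪ {q0, t0} := by
        ext w
        simp only [Set.mem_Ici, Set.mem_union, Set.mem_image, Set.mem_insert_iff,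
          Set.mem_singleton_iff]
        constructor
        · intro hw
          by_cases h1 : w = q0
          · exact Or.inr (Or.inl h1)
          by_cases h2 : w = t0
          · exact Or.inr (Or.inr h2)
          · exact Or.inl ⟨f.symm ⟨w, h1, h2⟩, he.mpr (by rw [hgsymm w h1 h2]; exact hw),
              hgsymm w h1 h2⟩
        · rintro (⟨v, hv, rfl⟩ | rfl | rfl)
          · exact he.mp hv
          · exact ((hmem_bd z).mp hzbd).le
          · exact hzt0.le
      rw [hset, finsum_mem_union ?disj (Set.toFinite _) (Set.toFinite _),
        finsum_mem_pair hq0t0, himgsum, hrq0, hrt0] at h0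
      case disj =>
        rw [Set.disjoint_left]
        rintro w ⟨v, _, rfl⟩ (h | h)
        · exact (hgne v).1 h
        · exact (hgne v).2 h
      rw [if_pos hzbd]
      linarith
    · have hset : Set.Ici (g z) = g '' Set.Ici z ∪ {t0} := by
        ext w
        simp only [Set.mem_Ici, Set.mem_union, Set.mem_image, Set.mem_singleton_iff]
        constructor
        · intro hw
          by_cases h2 : w = t0
          · exact Or.inr h2
          have h1 : w ≠ q0 := by
            rintro rfl
            exact hzbd ((hmem_bd z).mpr (lt_of_le_of_ne hw (hgne z).1))
          exact Or.inl ⟨f.symm ⟨w, h1, h2⟩, he.mpr (by rw [hgsymm w h1 h2]; exact hw),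
            hgsymm w h1 h2⟩
        · rintro (⟨v, hv, rfl⟩ | rfl)
          · exact he.mp hv
          · exact hzt0.le
      rw [hset, finsum_mem_union ?disj (Set.toFinite _) (Set.toFinite _),
        finsum_mem_singleton, himgsum, hrt0] at h0
      case disj =>
        rw [Set.disjoint_left]
        rintro w ⟨v, _, rfl⟩ h
        exact (hgne v).2 h
      rw [if_neg hzbd]
      linarith
  -- the chi computation for boundary upper sets
  have hchiBd : ∀ z ∈ boundary γ n,
      ∑ᶠ x ∈ {x : γ | z ≤ x ∧ x ∈ boundary γ n}, ((-1 : ℤ) ^ rho x) = -(-1 : ℤ) ^ n := by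
    intro z hz
    have hlt : g z < q0 := (hmem_bd z).mp hz
    have h0 := chi_Icc_zero hbalQ hlt
    have hset : Set.Icc (g z) q0 = g '' {x : γ | z ≤ x ∧ x ∈ boundary γ n} ∪ {q0} := by
      ext w
      simp only [Set.mem_Icc, Set.mem_union, Set.mem_image, Set.mem_setOf_eq,
        Set.mem_singleton_iff]
      constructor
      · rintro ⟨h1, h2⟩
        by_cases hwq : w = q0
        · exact Or.inr hwq
        have hwlt : w < q0 := lt_of_le_of_ne h2 hwq
        have hwt : w ≠ t0 := by
          rintro rfl
          exact absurd (le_antisymm (ht0 q0) hwlt.le) hq0t0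
        refine Or.inl ⟨f.symm ⟨w, hwq, hwt⟩, ⟨he.mpr (by rw [hgsymm w hwq hwt]; exact h1),
          (hmem_bd _).mpr (by rw [hgsymm w hwq hwt]; exact hwlt)⟩, hgsymm w hwq hwt⟩
      · rintro (⟨v, ⟨hv1, hv2⟩, rfl⟩ | rfl)
        · exact ⟨he.mp hv1, ((hmem_bd v).mp hv2).le⟩
        · exact ⟨hlt.le, le_rfl⟩
    rw [hset, finsum_mem_union ?disj (Set.toFinite _) (Set.toFinite _),
      finsum_mem_singleton, himgsum, hrq0] at h0
    case disj =>
      rw [Set.disjoint_left]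
      rintro w ⟨v, _, rfl⟩ h
      exact (hgne v).1 h
    linarith
  exact ⟨hn, hgγ, hbot_bd, hchiIci, hchiBd⟩

end NearEulerian

section SemisuspOrder

variable {P : Type} [PartialOrder P] [OrderBot P] {S : Set P}

set_option linter.unusedSectionVars false

theorem Semisusp.incl_le_incl {a b : P} :
    (Semisusp.incl a : Semisusp P S) ≤ Semisusp.incl b ↔ a ≤ b := Iff.rfl

theorem Semisusp.incl_le_q {a : P} :
    (Semisusp.incl a : Semisusp P S) ≤ Semisusp.q ↔ a = ⊥ ∨ ∃ s ∈ S, a ≤ s := Iff.rfl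

theorem Semisusp.not_q_le_incl {a : P} :
    ¬(Semisusp.q : Semisusp P S) ≤ Semisusp.incl a := fun h => h

theorem Semisusp.incl_ne_q {a : P} : (Semisusp.incl a : Semisusp P S) ≠ Semisusp.q := by
  intro h
  exact Option.some_ne_none a (congrArg Semisusp.toOpt h)

theorem Semisusp.incl_injective : Function.Injective (Semisusp.incl : P → Semisusp P S) := by
  intro a b h
  exact Option.some_injective P (congrArg Semisusp.toOpt h)

theorem Semisusp.eq_q_or_incl (x : Semisusp P S) :
    x = Semisusp.q ∨ ∃ a, x = Semisusp.incl a := by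
  rcases x with ⟨_ | a⟩
  · exact Or.inl rfl
  · exact Or.inr ⟨a, rfl⟩

end SemisuspOrder

section BoundarySemisusp

variable {P : Type} [PartialOrder P] [Finite P] [OrderBot P] {n : ℕ}

set_option linter.unusedSectionVars false

theorem bd_maxChain_card (hg : IsGradedOfRank P n) (hn : 1 ≤ n)
    (hb0 : (⊥ : P) ∈ boundary P n) {d : Finset P}
    (hd : MaxChainIn (boundary P n) d) : d.card = n := by
  have hdne : d.Nonempty := by
    by_contra h
    rw [Finset.not_nonempty_iff_eq_empty] at h
    subst h
    have := hd.2.2 {⊥} (by simpa using hb0) (by simp [IsChain]) (by simp)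
    exact Finset.singleton_ne_empty (⊥ : P) this.symm
  obtain ⟨m, hm, hmtop⟩ := chain_exists_top hdne hd.2.1
  have hmbd : m ∈ boundary P n := hd.1 hm
  obtain ⟨x, hx1, hx2, hx3⟩ := mem_boundary_iff.mp hmbd
  have hxbd : x ∈ boundary P n := mem_boundary_iff.mpr ⟨x, hx1, hx2, le_rfl⟩
  have hxd : x ∈ d := hd.mem_self hxbd (fun w hw => Or.inl ((hmtop w hw).trans hx3))
  have hmx : m = x := le_antisymm hx3 (hmtop x hxd)
  have hdIic : MaxChainIn (Set.Iic m) d := by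
    refine ⟨fun w hw => hmtop w (by exact_mod_cast hw), hd.2.1, ?_⟩
    intro u hu1 hu2 hdu
    refine hd.2.2 u (fun w hw => ?_) hu2 hdu
    exact boundary_lower hmbd (hu1 hw)
  have := maxChainIn_Iic_card hg hdIic
  rw [hmx, hx1] at this
  omega

theorem semisusp_pack (hg : IsGradedOfRank P n) (hn : 1 ≤ n)
    (hb0 : (⊥ : P) ∈ boundary P n) :
    (∀ a : P, rho ((Semisusp.incl a : Semisusp P (boundary P n)) :
        WithTop (Semisusp P (boundary P n))) = rho a) ∧
    rho ((Semisusp.q : Semisusp P (boundary P n)) :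
        WithTop (Semisusp P (boundary P n))) = n ∧
    rho (⊤ : WithTop (Semisusp P (boundary P n))) = n + 1 ∧
    IsGradedOfRank (WithTop (Semisusp P (boundary P n))) (n + 1) := by
  classical
  set W := WithTop (Semisusp P (boundary P n)) with hW
  haveI := Fintype.ofFinite (Semisusp P (boundary P n))
  haveI : Finite W := inferInstanceAs (Finite (Option (Semisusp P (boundary P n))))
  set e : P → W := fun a => ((Semisusp.incl a : Semisusp P (boundary P n)) : W) with hedef
  set qW : W := ((Semisusp.q : Semisusp P (boundary P n)) : W) with hqW
  have he : ∀ {u v : P}, u ≤ v ↔ e u ≤ e v := by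
    intro u v
    constructor
    · intro h
      exact WithTop.coe_le_coe.mpr ((Semisusp.incl_le_incl (S := boundary P n)).mpr h)
    · intro h
      exact (Semisusp.incl_le_incl (S := boundary P n)).mp (WithTop.coe_le_coe.mp h)
  have heinj : Function.Injective e := fun u v h => le_antisymm (he.mpr h.le) (he.mpr h.ge)
  have heq : ∀ {a : P}, e a ≤ qW ↔ a ∈ boundary P n := by
    intro a
    constructor
    · intro h
      have h' : (Semisusp.incl a : Semisusp P (boundary P n)) ≤ Semisusp.q :=
        WithTop.coe_le_coe.mp h
      rcases (Semisusp.incl_le_q (S := boundary P n)).mp h' with rfl | ⟨s, hs, has⟩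
      · exact hb0
      · exact boundary_lower hs has
    · intro h
      exact WithTop.coe_le_coe.mpr
        ((Semisusp.incl_le_q (S := boundary P n)).mpr (Or.inr ⟨a, h, le_rfl⟩))
  have hqe : ∀ {a : P}, ¬qW ≤ e a := by
    intro a h
    rw [hqW, hedef] at h
    exact Semisusp.not_q_le_incl (WithTop.coe_le_coe.mp h)
  have htope : ∀ {a : P}, ¬(⊤ : W) ≤ e a := fun {a} h =>
    (WithTop.coe_ne_top (a := (Semisusp.incl a : Semisusp P (boundary P n))))
      (le_antisymm le_top h)
  have htopq : ¬(⊤ : W) ≤ qW := fun h =>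
    (WithTop.coe_ne_top (a := (Semisusp.q : Semisusp P (boundary P n))))
      (le_antisymm le_top h)
  have heq_ne : ∀ {a : P}, e a ≠ qW := by
    intro a h
    rw [hedef, hqW] at h
    exact Semisusp.incl_ne_q (WithTop.coe_injective h)
  have he_ne_top : ∀ {a : P}, e a ≠ (⊤ : W) := fun {a} => WithTop.coe_ne_top
  have hq_ne_top : qW ≠ (⊤ : W) := WithTop.coe_ne_top
  -- classification of elements of W
  have hcases : ∀ x : W, x = ⊤ ∨ x = qW ∨ ∃ a, x = e a := by
    intro x
    induction x using WithTop.recTopCoe with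
    | top => exact Or.inl rfl
    | coe y =>
      rcases Semisusp.eq_q_or_incl y with rfl | ⟨a, rfl⟩
      · exact Or.inr (Or.inl rfl)
      · exact Or.inr (Or.inr ⟨a, rfl⟩)
  -- s1 : rank of elements of P is preserved
  have hs1 : ∀ a : P, rho (e a) = rho a := by
    intro a
    refine rho_emb (e := e) (fun {u v} => he) ?_
    intro b hb
    rcases hcases b with rfl | rfl | ⟨a', rfl⟩
    · exact absurd hb htope
    · exact absurd hb hqe
    · exact ⟨a', he.mpr hb, rfl⟩
  -- boundary elements have rank < n
  have hbd_rho : ∀ a ∈ boundary P n, rho a ≤ n - 1 := by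
    intro a ha
    obtain ⟨x, hx1, _, hx3⟩ := mem_boundary_iff.mp ha
    have := rho_mono hx3
    omega
  -- s2 : rank of q
  have hs2 : rho qW = n := by
    obtain ⟨x, hx1, hx2, -⟩ := mem_boundary_iff.mp hb0
    have hxbd : x ∈ boundary P n := mem_boundary_iff.mpr ⟨x, hx1, hx2, le_rfl⟩
    apply le_antisymm
    · -- upper bound
      obtain ⟨s, hch, hsub, hcard, hqs, hle⟩ := exists_rho_chain qW
      set s' := s.erase qW with hs'
      have hsub' : ∀ w ∈ s', ∃ a, w = e a ∧ a ∈ boundary P n := by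
        intro w hw
        obtain ⟨hwq, hws⟩ := Finset.mem_erase.mp hw
        rcases hcases w with rfl | rfl | ⟨a, rfl⟩
        · exact absurd (hle _ hws) htopq
        · exact absurd rfl hwq
        · exact ⟨a, rfl, heq.mp (hle _ hws)⟩
      have hcard' : s'.card + 1 = s.card := by
        rw [hs', Finset.card_erase_of_mem hqs]
        have : 1 ≤ s.card := Finset.card_pos.mpr ⟨qW, hqs⟩
        omega
      rcases Finset.eq_empty_or_nonempty s' with hemp | hne
      · rw [hemp] at hcard'
        simp at hcard'
        omega
      · have hch' : IsChain (· ≤ ·) (s' : Set W) :=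
          hch.mono (by exact_mod_cast Finset.erase_subset qW s)
        obtain ⟨m, hm, hmtop⟩ := chain_exists_top hne hch'
        obtain ⟨am, ham, hambd⟩ := hsub' m hm
        have hrm : rho m ≤ n - 1 := by
          rw [ham, hs1]
          exact hbd_rho am hambd
        have : s'.card ≤ rho m + 1 :=
          chain_card_le_rho s' hch' (fun w hw => hmtop w (by exact_mod_cast hw))
        omega
    · -- lower bound
      obtain ⟨s, hch, hsub, hcard, hxs, hle⟩ := exists_rho_chain x
      set t := s.image e ∪ {qW} with ht
      have hqimg : qW ∉ s.image e := by
        simp only [Finset.mem_image, not_exists]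
        rintro z ⟨_, hz⟩
        exact heq_ne hz
      have hcardt : t.card = s.card + 1 := by
        rw [ht, Finset.card_union_of_disjoint (by simp [hqimg]),
          Finset.card_image_of_injective _ heinj]
        simp
      have hcht : IsChain (· ≤ ·) (t : Set W) := by
        intro u hu v hv huv
        simp only [ht, Finset.coe_union, Finset.coe_image, Finset.coe_singleton,
          Set.mem_union, Set.mem_image, Set.mem_singleton_iff, Finset.mem_coe] at hu hv
        rcases hu with ⟨zu, hzu, rfl⟩ | rfl <;> rcases hv with ⟨zv, hzv, rfl⟩ | rfl
        · rcases hch (by exact_mod_cast hzu) (by exact_mod_cast hzv)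
            (fun h => huv (by rw [h])) with h | h
          · exact Or.inl (he.mp h)
          · exact Or.inr (he.mp h)
        · exact Or.inl (heq.mpr (boundary_lower hxbd (hle _ hzu)))
        · exact Or.inr (heq.mpr (boundary_lower hxbd (hle _ hzv)))
        · exact absurd rfl huv
      have hsubt : (t : Set W) ⊆ Set.Iic qW := by
        intro w hw
        simp only [ht, Finset.coe_union, Finset.coe_image, Finset.coe_singleton,
          Set.mem_union, Set.mem_image, Set.mem_singleton_iff, Finset.mem_coe] at hw
        rcases hw with ⟨z, hz, rfl⟩ | rfl
        · exact Set.mem_Iic.mpr (heq.mpr (boundary_lower hxbd (hle _ hz)))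
        · exact Set.mem_Iic.mpr le_rfl
      have := le_rho t hcht hsubt (by rw [hcardt, hcard, hx1])
      omega
  -- s3 : rank of ⊤
  have hs3 : rho (⊤ : W) = n + 1 := by
    apply le_antisymm
    · obtain ⟨s, hch, hsub, hcard, hts, hle⟩ := exists_rho_chain (⊤ : W)
      set s' := s.erase ⊤ with hs'
      have hcard' : s'.card + 1 = s.card := by
        rw [hs', Finset.card_erase_of_mem hts]
        have : 1 ≤ s.card := Finset.card_pos.mpr ⟨⊤, hts⟩
        omega
      rcases Finset.eq_empty_or_nonempty s' with hemp | hne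
      · rw [hemp] at hcard'
        simp at hcard'
        omega
      · have hch' : IsChain (· ≤ ·) (s' : Set W) :=
          hch.mono (by exact_mod_cast Finset.erase_subset (⊤ : W) s)
        obtain ⟨m, hm, hmtop⟩ := chain_exists_top hne hch'
        have hrm : rho m ≤ n := by
          rcases hcases m with rfl | rfl | ⟨a, rfl⟩
          · exact absurd (Finset.mem_erase.mp hm).1 (fun h => h rfl)
          · rw [hs2]
          · rw [hs1]
            exact rho_le_of_graded hg a
        have : s'.card ≤ rho m + 1 :=
          chain_card_le_rho s' hch' (fun w hw => hmtop w (by exact_mod_cast hw))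
        omega
    · obtain ⟨c, -, hc⟩ := exists_maxChainIn (Set.univ : Set P) (∅ : Finset P)
        (by simp) (by simp [IsChain])
      have hcard := hc.card_univ hg
      set t := c.image e ∪ {(⊤ : W)} with ht
      have htimg : (⊤ : W) ∉ c.image e := by
        simp only [Finset.mem_image, not_exists]
        rintro z ⟨_, hz⟩
        exact he_ne_top hz
      have hcardt : t.card = c.card + 1 := by
        rw [ht, Finset.card_union_of_disjoint (by simp [htimg]),
          Finset.card_image_of_injective _ heinj]
        simp
      have hcht : IsChain (· ≤ ·) (t : Set W) := by
        intro u hu v hv huv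
        simp only [ht, Finset.coe_union, Finset.coe_image, Finset.coe_singleton,
          Set.mem_union, Set.mem_image, Set.mem_singleton_iff, Finset.mem_coe] at hu hv
        rcases hu with ⟨zu, hzu, rfl⟩ | rfl <;> rcases hv with ⟨zv, hzv, rfl⟩ | rfl
        · rcases hc.2.1 (by exact_mod_cast hzu) (by exact_mod_cast hzv)
            (fun h => huv (by rw [h])) with h | h
          · exact Or.inl (he.mp h)
          · exact Or.inr (he.mp h)
        · exact Or.inl le_top
        · exact Or.inr le_top
        · exact absurd rfl huv
      have := le_rho t hcht (fun w _ => Set.mem_Iic.mpr le_top) (by rw [hcardt, hcard])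
      omega
  -- a generic pullback of finsets of `W` consisting of images
  have pull : ∀ c₀ : Finset W, (∀ w ∈ c₀, ∃ a, w = e a) →
      ∃ d : Finset P, d.image e = c₀ ∧ d.card = c₀.card ∧ ∀ a ∈ d, e a ∈ c₀ := by
    intro c₀ hc₀
    set gfun : W → P := fun w => if h : ∃ a, w = e a then h.choose else ⊥ with hgfun
    have hgspec : ∀ w ∈ c₀, e (gfun w) = w := by
      intro w hw
      have hex := hc₀ w hw
      rw [hgfun]
      simp only [dif_pos hex]
      exact hex.choose_spec.symm
    refine ⟨c₀.image gfun, ?_, ?_, ?_⟩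
    · ext w
      simp only [Finset.mem_image]
      constructor
      · rintro ⟨a, ⟨w', hw', rfl⟩, rfl⟩
        rw [hgspec w' hw']
        exact hw'
      · intro hw
        exact ⟨gfun w, ⟨w, hw, rfl⟩, hgspec w hw⟩
    · apply le_antisymm
      · exact Finset.card_image_le
      · have : c₀ = (c₀.image gfun).image e := by
          ext w
          simp only [Finset.mem_image]
          constructor
          · intro hw
            exact ⟨gfun w, ⟨w, hw, rfl⟩, hgspec w hw⟩
          · rintro ⟨a, ⟨w', hw', rfl⟩, rfl⟩
            rw [hgspec w' hw']
            exact hw'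
        calc c₀.card = ((c₀.image gfun).image e).card := by rw [← this]
        _ ≤ (c₀.image gfun).card := Finset.card_image_le
    · rintro a ha
      obtain ⟨w, hw, rfl⟩ := Finset.mem_image.mp ha
      rw [hgspec w hw]
      exact hw
  -- s4 : gradedness
  have hs4 : IsGradedOfRank W (n + 1) := by
    intro c hsub hchain hmax
    have hcmax : MaxChainIn (Set.univ : Set W) c := ⟨hsub, hchain, hmax⟩
    have htc : (⊤ : W) ∈ c := hcmax.mem_self trivial (fun w _ => Or.inl le_top)
    have hchain_d : ∀ d : Finset P, (∀ a ∈ d, e a ∈ c) → IsChain (· ≤ ·) (d : Set P) := by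
      intro d hdc a ha b hb hne
      rcases hchain (by exact_mod_cast hdc a (by exact_mod_cast ha))
        (by exact_mod_cast hdc b (by exact_mod_cast hb)) (fun h => hne (heinj h)) with h | h
      · exact Or.inl (he.mpr h)
      · exact Or.inr (he.mpr h)
    have hch2build : ∀ u : Finset P, IsChain (· ≤ ·) (u : Set P) →
        (∀ z ∈ u, ∀ w ∈ c, e z = w ∨ e z ≤ w ∨ w ≤ e z) →
        IsChain (· ≤ ·) ((c ∪ u.image e : Finset W) : Set W) := by
      intro u hu2 hcomp w1 hw1 w2 hw2 hne
      simp only [Finset.coe_union, Set.mem_union, Finset.mem_coe, Finset.coe_image,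
        Set.mem_image] at hw1 hw2
      rcases hw1 with hw1 | ⟨z1, hz1, rfl⟩ <;> rcases hw2 with hw2 | ⟨z2, hz2, rfl⟩
      · exact hchain (by exact_mod_cast hw1) (by exact_mod_cast hw2) hne
      · rcases hcomp z2 (by exact_mod_cast hz2) w1 hw1 with h | h | h
        · exact absurd h.symm hne
        · exact Or.inr h
        · exact Or.inl h
      · rcases hcomp z1 (by exact_mod_cast hz1) w2 hw2 with h | h | h
        · exact absurd h hne
        · exact Or.inl h
        · exact Or.inr h
      · have hz12 : z1 ≠ z2 := fun h => hne (by rw [h])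
        rcases hu2 hz1 hz2 hz12 with h | h
        · exact Or.inl (he.mp h)
        · exact Or.inr (he.mp h)
    by_cases hqc : qW ∈ c
    · -- the chain passes through q
      set c'' := (c.erase ⊤).erase qW with hc''
      have hmemc'' : ∀ w, w ∈ c'' ↔ w ∈ c ∧ w ≠ ⊤ ∧ w ≠ qW := by
        intro w
        rw [hc'']
        simp only [Finset.mem_erase]
        tauto
      have hsub'' : ∀ w ∈ c'', ∃ a, w = e a ∧ a ∈ boundary P n := by
        intro w hw
        obtain ⟨hwc, hwt, hwq⟩ := (hmemc'' w).mp hw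
        rcases hcases w with rfl | rfl | ⟨a, rfl⟩
        · exact absurd rfl hwt
        · exact absurd rfl hwq
        · refine ⟨a, rfl, ?_⟩
          rcases hchain (by exact_mod_cast hwc) (by exact_mod_cast hqc) heq_ne with h | h
          · exact heq.mp h
          · exact absurd h hqe
      obtain ⟨d, hdimg, hdcard, hdmem⟩ := pull c'' (fun w hw => ⟨(hsub'' w hw).choose,
        (hsub'' w hw).choose_spec.1⟩)
      have hdc : ∀ a ∈ d, e a ∈ c := fun a ha =>
        ((hmemc'' _).mp (hdmem a ha)).1
      have hdbd : ∀ a ∈ d, a ∈ boundary P n := by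
        intro a ha
        obtain ⟨a', ha', hbd'⟩ := hsub'' (e a) (hdmem a ha)
        rw [heinj ha']
        exact hbd'
      have hdch : IsChain (· ≤ ·) (d : Set P) := hchain_d d hdc
      have hdmax : MaxChainIn (boundary P n) d := by
        refine ⟨fun a ha => hdbd a (by exact_mod_cast ha), hdch, ?_⟩
        intro u hu1 hu2 hdu
        have himgcomp : ∀ z ∈ u, ∀ w ∈ c, e z = w ∨ e z ≤ w ∨ w ≤ e z := by
          intro z hz w hwc
          rcases hcases w with rfl | rfl | ⟨a, rfl⟩
          · exact Or.inr (Or.inl le_top)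
          · exact Or.inr (Or.inl (heq.mpr (hu1 (Finset.mem_coe.mpr hz))))
          · have hac : e a ∈ c'' := (hmemc'' _).mpr ⟨hwc, he_ne_top, heq_ne⟩
            rw [← hdimg] at hac
            obtain ⟨b, hb, hba⟩ := Finset.mem_image.mp hac
            have hau : b ∈ u := hdu hb
            rcases eq_or_ne z b with rfl | hne2
            · exact Or.inl hba
            · rcases hu2 (Finset.mem_coe.mpr hz) (Finset.mem_coe.mpr hau) hne2 with h | h
              · exact Or.inr (Or.inl (hba ▸ he.mp h))
              · exact Or.inr (Or.inr (hba ▸ he.mp h))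
        have hch2 := hch2build u hu2 himgcomp
        have hceq := hmax (c ∪ u.image e) (by simp) hch2 Finset.subset_union_left
        refine Finset.Subset.antisymm hdu (fun z hz => ?_)
        have hez : e z ∈ c := by
          rw [hceq]
          exact Finset.mem_union_right _ (Finset.mem_image_of_mem e hz)
        have hez'' : e z ∈ c'' := (hmemc'' _).mpr ⟨hez, he_ne_top, heq_ne⟩
        rw [← hdimg] at hez''
        obtain ⟨a, ha, haz⟩ := Finset.mem_image.mp hez''
        rwa [← heinj haz]
      have h3 := bd_maxChain_card hg hn hb0 hdmax
      have h1 : (c.erase ⊤).card = c.card - 1 := Finset.card_erase_of_mem htc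
      have h2 : c''.card = (c.erase ⊤).card - 1 :=
        Finset.card_erase_of_mem (Finset.mem_erase.mpr ⟨hq_ne_top, hqc⟩)
      have hcpos : 2 ≤ c.card := by
        have hsub2 : ({qW, ⊤} : Finset W) ⊆ c := by
          intro w hw
          rcases Finset.mem_insert.mp hw with rfl | hw
          · exact hqc
          · rw [Finset.mem_singleton.mp hw]
            exact htc
        have := Finset.card_le_card hsub2
        rw [Finset.card_pair hq_ne_top] at this
        exact this
      omega
    · -- the chain avoids q
      set c' := c.erase ⊤ with hc'
      have hsub' : ∀ w ∈ c', ∃ a, w = e a := by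
        intro w hw
        obtain ⟨hwt, hwc⟩ := Finset.mem_erase.mp hw
        rcases hcases w with rfl | rfl | ⟨a, rfl⟩
        · exact absurd rfl hwt
        · exact absurd hwc hqc
        · exact ⟨a, rfl⟩
      obtain ⟨d, hdimg, hdcard, hdmem⟩ := pull c' hsub'
      have hdc : ∀ a ∈ d, e a ∈ c := fun a ha => Finset.mem_of_mem_erase (hdmem a ha)
      have hdch := hchain_d d hdc
      have hdmax : MaxChainIn (Set.univ : Set P) d := by
        refine ⟨Set.subset_univ _, hdch, ?_⟩
        intro u _ hu2 hdu
        have himgcomp : ∀ z ∈ u, ∀ w ∈ c, e z = w ∨ e z ≤ w ∨ w ≤ e z := by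
          intro z hz w hwc
          rcases hcases w with rfl | rfl | ⟨a, rfl⟩
          · exact Or.inr (Or.inl le_top)
          · exact absurd hwc hqc
          · have hac : e a ∈ c' := Finset.mem_erase.mpr ⟨he_ne_top, hwc⟩
            rw [← hdimg] at hac
            obtain ⟨b, hb, hba⟩ := Finset.mem_image.mp hac
            have hau : b ∈ u := hdu hb
            rcases eq_or_ne z b with rfl | hne2
            · exact Or.inl hba
            · rcases hu2 (Finset.mem_coe.mpr hz) (Finset.mem_coe.mpr hau) hne2 with h | h
              · exact Or.inr (Or.inl (hba ▸ he.mp h))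
              · exact Or.inr (Or.inr (hba ▸ he.mp h))
        have hch2 := hch2build u hu2 himgcomp
        have hceq := hmax (c ∪ u.image e) (by simp) hch2 Finset.subset_union_left
        refine Finset.Subset.antisymm hdu (fun z hz => ?_)
        have hez : e z ∈ c := by
          rw [hceq]
          exact Finset.mem_union_right _ (Finset.mem_image_of_mem e hz)
        have hez' : e z ∈ c' := Finset.mem_erase.mpr ⟨he_ne_top, hez⟩
        rw [← hdimg] at hez'
        obtain ⟨a, ha, haz⟩ := Finset.mem_image.mp hez'
        rwa [← heinj haz]
      have h3 := hdmax.card_univ hg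
      have h1 : c'.card = c.card - 1 := Finset.card_erase_of_mem htc
      have hcpos : 1 ≤ c.card := Finset.card_pos.mpr ⟨⊤, htc⟩
      omega
  exact ⟨hs1, hs2, hs3, hs4⟩

end BoundarySemisusp

section WFacts

variable {P : Type} [PartialOrder P] [OrderBot P] {S : Set P}

set_option linter.unusedSectionVars false

theorem W_incl_le_incl {a b : P} :
    ((Semisusp.incl a : Semisusp P S) : WithTop (Semisusp P S)) ≤
      ((Semisusp.incl b : Semisusp P S) : WithTop (Semisusp P S)) ↔ a ≤ b := by
  rw [WithTop.coe_le_coe]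
  exact Semisusp.incl_le_incl

theorem W_not_q_le_incl {a : P} :
    ¬((Semisusp.q : Semisusp P S) : WithTop (Semisusp P S)) ≤
      ((Semisusp.incl a : Semisusp P S) : WithTop (Semisusp P S)) := fun h =>
  Semisusp.not_q_le_incl (WithTop.coe_le_coe.mp h)

theorem W_not_top_le_coe {x : Semisusp P S} :
    ¬(⊤ : WithTop (Semisusp P S)) ≤ (x : WithTop (Semisusp P S)) := fun h =>
  WithTop.coe_ne_top (le_antisymm le_top h)

theorem W_incl_ne_q {a : P} :
    ((Semisusp.incl a : Semisusp P S) : WithTop (Semisusp P S)) ≠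
      ((Semisusp.q : Semisusp P S) : WithTop (Semisusp P S)) := fun h =>
  Semisusp.incl_ne_q (WithTop.coe_injective h)

theorem W_incl_inj : Function.Injective
    (fun a : P => ((Semisusp.incl a : Semisusp P S) : WithTop (Semisusp P S))) :=
  fun a b h => Semisusp.incl_injective (WithTop.coe_injective h)

theorem W_cases (x : WithTop (Semisusp P S)) :
    x = ⊤ ∨ x = ((Semisusp.q : Semisusp P S) : WithTop (Semisusp P S)) ∨
      ∃ a, x = ((Semisusp.incl a : Semisusp P S) : WithTop (Semisusp P S)) := by
  induction x using WithTop.recTopCoe with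
  | top => exact Or.inl rfl
  | coe y =>
    rcases Semisusp.eq_q_or_incl y with rfl | ⟨a, rfl⟩
    · exact Or.inr (Or.inl rfl)
    · exact Or.inr (Or.inr ⟨a, rfl⟩)

end WFacts

section WBoundaryFacts

variable {P : Type} [PartialOrder P] [Finite P] [OrderBot P] {n : ℕ}

set_option linter.unusedSectionVars false

theorem W_incl_le_q (hb0 : (⊥ : P) ∈ boundary P n) {a : P} :
    ((Semisusp.incl a : Semisusp P (boundary P n)) : WithTop (Semisusp P (boundary P n))) ≤
      ((Semisusp.q : Semisusp P (boundary P n)) : WithTop (Semisusp P (boundary P n))) ↔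
      a ∈ boundary P n := by
  constructor
  · intro h
    rcases (Semisusp.incl_le_q (S := boundary P n)).mp (WithTop.coe_le_coe.mp h) with
      rfl | ⟨s, hs, has⟩
    · exact hb0
    · exact boundary_lower hs has
  · intro h
    exact WithTop.coe_le_coe.mpr
      ((Semisusp.incl_le_q (S := boundary P n)).mpr (Or.inr ⟨a, h, le_rfl⟩))

end WBoundaryFacts

section ExtPFacts

variable [PartialOrder α] [PartialOrder β] {σ : α → β} {G : Set β}

theorem ExtP.inl_le_inl {y y' : α} :
    (ExtP.mk (Sum.inl y) : ExtP σ G) ≤ ExtP.mk (Sum.inl y') ↔ y ≤ y' := Iff.rfl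

theorem ExtP.inl_le_inr {y : α} {x : {x : β // x ∉ G}} :
    (ExtP.mk (Sum.inl y) : ExtP σ G) ≤ ExtP.mk (Sum.inr x) ↔
      ∃ y', y ≤ y' ∧ σ y' ≤ (x : β) := Iff.rfl

theorem ExtP.not_inr_le_inl {y : α} {x : {x : β // x ∉ G}} :
    ¬(ExtP.mk (Sum.inr x) : ExtP σ G) ≤ ExtP.mk (Sum.inl y) := fun h => h

theorem ExtP.inr_le_inr {x x' : {x : β // x ∉ G}} :
    (ExtP.mk (Sum.inr x) : ExtP σ G) ≤ ExtP.mk (Sum.inr x') ↔ (x : β) ≤ (x' : β) :=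
  Iff.rfl

theorem ExtP.eq_cases (p : ExtP σ G) :
    (∃ y, p = ExtP.mk (Sum.inl y)) ∨ ∃ x, p = ExtP.mk (Sum.inr x) := by
  rcases p with ⟨y | x⟩
  · exact Or.inl ⟨y, rfl⟩
  · exact Or.inr ⟨x, rfl⟩

theorem ExtP.extMap_inl {y : α} : ExtP.extMap σ G (ExtP.mk (Sum.inl y)) = σ y := rfl

theorem ExtP.extMap_inr {x : {x : β // x ∉ G}} :
    ExtP.extMap σ G (ExtP.mk (Sum.inr x)) = (x : β) := rfl

end ExtPFacts

/-- Let `σ : Π → Γ` be a strong formal subdivision of rank `0` between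
lower Eulerian posets and suppose `Γ` is near-Eulerian (of rank `n`).  Then `Π` is
near-Eulerian, `σ` extends to a strong formal subdivision between the Eulerian posets
obtained from the semisuspensions (namely the extension of `σ` over `Σ̃Γ ∪ {1̂}`, which
is order-isomorphic to `Σ̃Π ∪ {1̂}` by an isomorphism sending the semisuspension vertex
`q_Π` to `q_Γ`), and `σ⁻¹(∂Γ) = ∂Π`. -/
theorem sfs_extends_to_semisuspensions
    (α γ : Type) [PartialOrder α] [Finite α] [OrderBot α]
    [PartialOrder γ] [Finite γ] [OrderBot γ] (n : ℕ)
    (hPi : IsLowerEulerianOfRank α n) (hG : IsNearEulerianOfRank γ n)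
    (σ : α → γ) (hσ : IsSFS σ) :
    IsNearEulerianOfRank α n ∧
    IsSFS (ExtP.extMap
      (fun y => ((Semisusp.incl (σ y) : Semisusp γ (boundary γ n)) :
        WithTop (Semisusp γ (boundary γ n))))
      (Set.range fun z : γ =>
        ((Semisusp.incl z : Semisusp γ (boundary γ n)) :
          WithTop (Semisusp γ (boundary γ n))))) ∧
    (∃ e : ExtP
        (fun y => ((Semisusp.incl (σ y) : Semisusp γ (boundary γ n)) :
          WithTop (Semisusp γ (boundary γ n))))
        (Set.range fun z : γ =>
          ((Semisusp.incl z : Semisusp γ (boundary γ n)) :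
            WithTop (Semisusp γ (boundary γ n)))) ≃o
          WithTop (Semisusp α (boundary α n)),
      ExtP.extMap _ _
          (e.symm ((Semisusp.q : Semisusp α (boundary α n)) :
            WithTop (Semisusp α (boundary α n)))) =
        ((Semisusp.q : Semisusp γ (boundary γ n)) : WithTop (Semisusp γ (boundary γ n)))) ∧
    σ ⁻¹' boundary γ n = boundary α n := by
  classical
  obtain ⟨-, hgα, hbalα⟩ := hPi
  obtain ⟨hn, hgγ, hbotγ, hchiIciγ, hchiBdγ⟩ := nearEulerian_pack hG
  have hbdpre : σ ⁻¹' boundary γ n = boundary α n :=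
    sfs_boundary_preimage hgα hgγ σ hσ hn
  have hmembd : ∀ y : α, y ∈ boundary α n ↔ σ y ∈ boundary γ n := by
    intro y
    rw [← hbdpre]
    exact Iff.rfl
  have hσbot : σ (⊥ : α) = ⊥ := by
    obtain ⟨w, hw⟩ := hσ.2.2.1 (⊥ : γ)
    have h := hσ.1 (bot_le : (⊥ : α) ≤ w)
    rw [hw] at h
    exact le_bot_iff.mp h
  have hbotα : (⊥ : α) ∈ boundary α n := by
    rw [hmembd, hσbot]
    exact hbotγ
  obtain ⟨hs1A, hs2A, hs3A, hs4A⟩ := semisusp_pack hgα hn hbotα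
  obtain ⟨hs1B, hs2B, hs3B, hs4B⟩ := semisusp_pack hgγ hn hbotγ
  haveI : Fintype (Semisusp γ (boundary γ n)) := Fintype.ofFinite _
  haveI hfinB : Finite (WithTop (Semisusp γ (boundary γ n))) :=
    inferInstanceAs (Finite (Option (Semisusp γ (boundary γ n))))
  haveI : Fintype (Semisusp α (boundary α n)) := Fintype.ofFinite _
  haveI hfinA : Finite (WithTop (Semisusp α (boundary α n))) :=
    inferInstanceAs (Finite (Option (Semisusp α (boundary α n))))
  have hq_notG : ((Semisusp.q : Semisusp γ (boundary γ n)) :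
      WithTop (Semisusp γ (boundary γ n))) ∉ Set.range (fun z : γ =>
      ((Semisusp.incl z : Semisusp γ (boundary γ n)) :
        WithTop (Semisusp γ (boundary γ n)))) := by
    rintro ⟨z, hz⟩
    exact W_incl_ne_q hz
  have htop_notG : (⊤ : WithTop (Semisusp γ (boundary γ n))) ∉ Set.range (fun z : γ =>
      ((Semisusp.incl z : Semisusp γ (boundary γ n)) :
        WithTop (Semisusp γ (boundary γ n)))) := by
    rintro ⟨z, hz⟩
    exact WithTop.coe_ne_top hz
  -- classification of the complement of `G`
  have hGcases : ∀ x : {x : WithTop (Semisusp γ (boundary γ n)) //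
      x ∉ Set.range (fun z : γ => ((Semisusp.incl z : Semisusp γ (boundary γ n)) :
        WithTop (Semisusp γ (boundary γ n))))},
      (x : WithTop (Semisusp γ (boundary γ n))) = ⊤ ∨
      (x : WithTop (Semisusp γ (boundary γ n))) =
        ((Semisusp.q : Semisusp γ (boundary γ n)) : WithTop (Semisusp γ (boundary γ n))) := by
    rintro ⟨x, hx⟩
    rcases W_cases x with rfl | rfl | ⟨a, rfl⟩
    · exact Or.inl rfl
    · exact Or.inr rfl
    · exact absurd ⟨a, rfl⟩ hx
  -- abbreviation facts for the semisuspension of α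
  have himgA : ∀ S : Set α,
      ∑ᶠ w ∈ (fun a : α => ((Semisusp.incl a : Semisusp α (boundary α n)) :
        WithTop (Semisusp α (boundary α n)))) '' S, ((-1 : ℤ) ^ rho w) =
      ∑ᶠ y ∈ S, ((-1 : ℤ) ^ rho y) := by
    intro S
    rw [finsum_mem_image (Set.injOn_of_injective W_incl_inj)]
    exact finsum_mem_congr rfl (fun y _ => by rw [hs1A])
  have hpow : ((-1 : ℤ)) ^ (n + 1) = -(-1 : ℤ) ^ n := by
    rw [pow_succ]; ring
  -- Balancedness of the semisuspension of α
  have hbalA : BalancedIntervalsIn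
      (Set.univ : Set (WithTop (Semisusp α (boundary α n)))) := by
    intro s _ t _ hst
    rw [balanced_chi_iff]
    rcases W_cases s with rfl | rfl | ⟨a, rfl⟩
    · exact absurd hst not_top_lt
    · rcases W_cases t with rfl | rfl | ⟨b, rfl⟩
      · -- interval [q, ⊤]
        have hset : Set.Icc ((Semisusp.q : Semisusp α (boundary α n)) :
            WithTop (Semisusp α (boundary α n))) ⊤ =
            {((Semisusp.q : Semisusp α (boundary α n)) :
              WithTop (Semisusp α (boundary α n))), ⊤} := by
          ext w
          simp only [Set.mem_Icc, le_top, and_true, Set.mem_insert_iff,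
            Set.mem_singleton_iff]
          constructor
          · intro hw
            rcases W_cases w with rfl | rfl | ⟨c, rfl⟩
            · exact Or.inr rfl
            · exact Or.inl rfl
            · exact absurd hw W_not_q_le_incl
          · rintro (rfl | rfl)
            · exact le_rfl
            · exact le_top
        rw [hset, finsum_mem_pair WithTop.coe_ne_top, hs2A, hs3A, hpow]
        ring
      · exact absurd hst (lt_irrefl _)
      · exact absurd hst.le W_not_q_le_incl
    · rcases W_cases t with rfl | rfl | ⟨b, rfl⟩
      · -- interval [incl a, ⊤]
        have hkey := sfs_chi_Ici σ hσ a
        rw [hchiIciγ (σ a)] at hkey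
        by_cases habd : a ∈ boundary α n
        · have hset : Set.Icc ((Semisusp.incl a : Semisusp α (boundary α n)) :
              WithTop (Semisusp α (boundary α n))) ⊤ =
              (fun y : α => ((Semisusp.incl y : Semisusp α (boundary α n)) :
                WithTop (Semisusp α (boundary α n)))) '' Set.Ici a ∪
              {((Semisusp.q : Semisusp α (boundary α n)) :
                WithTop (Semisusp α (boundary α n))), ⊤} := by
            ext w
            simp only [Set.mem_Icc, le_top, and_true, Set.mem_union, Set.mem_image,
              Set.mem_Ici, Set.mem_insert_iff, Set.mem_singleton_iff]
            constructor
            · intro hw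
              rcases W_cases w with rfl | rfl | ⟨c, rfl⟩
              · exact Or.inr (Or.inr rfl)
              · exact Or.inr (Or.inl rfl)
              · exact Or.inl ⟨c, W_incl_le_incl.mp hw, rfl⟩
            · rintro (⟨c, hc, rfl⟩ | rfl | rfl)
              · exact W_incl_le_incl.mpr hc
              · exact (W_incl_le_q hbotα).mpr habd
              · exact le_top
          rw [hset, finsum_mem_union ?disj1 (Set.toFinite _) (Set.toFinite _),
            finsum_mem_pair WithTop.coe_ne_top, himgA, hs2A, hs3A, hkey,
            if_pos ((hmembd a).mp habd), hpow]
          case disj1 =>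
            rw [Set.disjoint_left]
            rintro w ⟨c, _, rfl⟩ (h | h)
            · exact W_incl_ne_q h
            · exact WithTop.coe_ne_top h
          ring
        · have hset : Set.Icc ((Semisusp.incl a : Semisusp α (boundary α n)) :
              WithTop (Semisusp α (boundary α n))) ⊤ =
              (fun y : α => ((Semisusp.incl y : Semisusp α (boundary α n)) :
                WithTop (Semisusp α (boundary α n)))) '' Set.Ici a ∪ {⊤} := by
            ext w
            simp only [Set.mem_Icc, le_top, and_true, Set.mem_union, Set.mem_image,
              Set.mem_Ici, Set.mem_singleton_iff]
            constructor
            · intro hw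
              rcases W_cases w with rfl | rfl | ⟨c, rfl⟩
              · exact Or.inr rfl
              · exact absurd ((W_incl_le_q hbotα).mp hw) habd
              · exact Or.inl ⟨c, W_incl_le_incl.mp hw, rfl⟩
            · rintro (⟨c, hc, rfl⟩ | rfl)
              · exact W_incl_le_incl.mpr hc
              · exact le_top
          rw [hset, finsum_mem_union ?disj2 (Set.toFinite _) (Set.toFinite _),
            finsum_mem_singleton, himgA, hs3A, hkey,
            if_neg (fun h => habd ((hmembd a).mpr h)), hpow]
          case disj2 =>
            rw [Set.disjoint_left]
            rintro w ⟨c, _, rfl⟩ h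
            exact WithTop.coe_ne_top h
          ring
      · -- interval [incl a, q]
        have habd : a ∈ boundary α n := (W_incl_le_q hbotα).mp hst.le
        have hset : Set.Icc ((Semisusp.incl a : Semisusp α (boundary α n)) :
            WithTop (Semisusp α (boundary α n)))
            ((Semisusp.q : Semisusp α (boundary α n)) :
              WithTop (Semisusp α (boundary α n))) =
            (fun y : α => ((Semisusp.incl y : Semisusp α (boundary α n)) :
              WithTop (Semisusp α (boundary α n)))) '' {y : α | a ≤ y ∧ y ∈ boundary α n} ∪
            {((Semisusp.q : Semisusp α (boundary α n)) :
              WithTop (Semisusp α (boundary α n)))} := by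
          ext w
          simp only [Set.mem_Icc, Set.mem_union, Set.mem_image, Set.mem_setOf_eq,
            Set.mem_singleton_iff]
          constructor
          · rintro ⟨hw1, hw2⟩
            rcases W_cases w with rfl | rfl | ⟨c, rfl⟩
            · exact absurd hw2 (fun h => WithTop.coe_ne_top (le_antisymm le_top h))
            · exact Or.inr rfl
            · exact Or.inl ⟨c, ⟨W_incl_le_incl.mp hw1, (W_incl_le_q hbotα).mp hw2⟩, rfl⟩
          · rintro (⟨c, ⟨hc1, hc2⟩, rfl⟩ | rfl)
            · exact ⟨W_incl_le_incl.mpr hc1, (W_incl_le_q hbotα).mpr hc2⟩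
            · exact ⟨hst.le, le_rfl⟩
        have hbdset : {y : α | a ≤ y ∧ y ∈ boundary α n} =
            {y : α | a ≤ y ∧ σ y ∈ boundary γ n} := by
          ext y
          simp only [Set.mem_setOf_eq]
          rw [hmembd]
        have hkey : ∑ᶠ y ∈ {y : α | a ≤ y ∧ y ∈ boundary α n}, ((-1 : ℤ) ^ rho y) =
            -(-1 : ℤ) ^ n := by
          rw [hbdset, sfs_sum_fiber σ hσ a (boundary γ n)]
          exact hchiBdγ (σ a) ((hmembd a).mp habd)
        rw [hset, finsum_mem_union ?disj3 (Set.toFinite _) (Set.toFinite _),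
          finsum_mem_singleton, himgA, hs2A, hkey]
        case disj3 =>
          rw [Set.disjoint_left]
          rintro w ⟨c, _, rfl⟩ h
          exact W_incl_ne_q h
        ring
      · -- interval [incl a, incl b]
        have hab : a < b := by
          refine lt_of_le_of_ne (W_incl_le_incl.mp hst.le) ?_
          rintro rfl
          exact lt_irrefl _ hst
        have hset : Set.Icc ((Semisusp.incl a : Semisusp α (boundary α n)) :
            WithTop (Semisusp α (boundary α n)))
            ((Semisusp.incl b : Semisusp α (boundary α n)) :
              WithTop (Semisusp α (boundary α n))) =
            (fun y : α => ((Semisusp.incl y : Semisusp α (boundary α n)) :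
              WithTop (Semisusp α (boundary α n)))) '' Set.Icc a b := by
          ext w
          simp only [Set.mem_Icc, Set.mem_image]
          constructor
          · rintro ⟨hw1, hw2⟩
            rcases W_cases w with rfl | rfl | ⟨c, rfl⟩
            · exact absurd hw2 W_not_top_le_coe
            · exact absurd hw2 W_not_q_le_incl
            · exact ⟨c, ⟨W_incl_le_incl.mp hw1, W_incl_le_incl.mp hw2⟩, rfl⟩
          · rintro ⟨c, ⟨hc1, hc2⟩, rfl⟩
            exact ⟨W_incl_le_incl.mpr hc1, W_incl_le_incl.mpr hc2⟩
        rw [hset, himgA]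
        exact (balanced_chi_iff _).mp (hbalα a trivial b trivial hab)
  -- the order isomorphism
  set isoEA : ExtP
      (fun y => ((Semisusp.incl (σ y) : Semisusp γ (boundary γ n)) :
        WithTop (Semisusp γ (boundary γ n))))
      (Set.range fun z : γ =>
        ((Semisusp.incl z : Semisusp γ (boundary γ n)) :
          WithTop (Semisusp γ (boundary γ n)))) ≃o
      WithTop (Semisusp α (boundary α n)) :=
    { toEquiv := ⟨fun p =>
        match p with
        | ⟨Sum.inl y⟩ => ((Semisusp.incl y : Semisusp α (boundary α n)) :
            WithTop (Semisusp α (boundary α n)))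
        | ⟨Sum.inr x⟩ =>
            if (x : WithTop (Semisusp γ (boundary γ n))) =
                ((Semisusp.q : Semisusp γ (boundary γ n)) :
                  WithTop (Semisusp γ (boundary γ n)))
            then ((Semisusp.q : Semisusp α (boundary α n)) :
              WithTop (Semisusp α (boundary α n)))
            else ⊤,
      fun w => WithTop.recTopCoe ⟨Sum.inr ⟨⊤, htop_notG⟩⟩
        (fun s => Option.rec (⟨Sum.inr ⟨((Semisusp.q : Semisusp γ (boundary γ n)) :
            WithTop (Semisusp γ (boundary γ n))), hq_notG⟩⟩)
          (fun a => ⟨Sum.inl a⟩) s.toOpt) w,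
      by
        intro p
        rcases p with ⟨y | ⟨xv, hxv⟩⟩
        · rfl
        · rcases W_cases xv with rfl | rfl | ⟨a, rfl⟩
          · dsimp only
            rw [if_neg (Ne.symm WithTop.coe_ne_top)]
            rfl
          · dsimp only
            rw [if_pos rfl]
            rfl
          · exact absurd ⟨a, rfl⟩ hxv,
      by
        intro w
        rcases W_cases w with rfl | rfl | ⟨a, rfl⟩
        · dsimp only
          rw [WithTop.recTopCoe_top]
          dsimp only
          rw [if_neg (Ne.symm WithTop.coe_ne_top)]
        · dsimp only
          rw [WithTop.recTopCoe_coe]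
          dsimp only [Semisusp.q]
          exact if_pos rfl
        · dsimp only
          rw [WithTop.recTopCoe_coe]
          dsimp only [Semisusp.incl]⟩,
      map_rel_iff' := by
        intro p p'
        simp only [RelIso.coe_fn_mk, Equiv.coe_fn_mk]
        rcases p with ⟨y | ⟨xv, hxv⟩⟩ <;> rcases p' with ⟨y' | ⟨xv', hxv'⟩⟩
        · dsimp only
          rw [ExtP.inl_le_inl]
          exact W_incl_le_incl
        · rcases W_cases xv' with rfl | rfl | ⟨a, rfl⟩
          · dsimp only
            rw [if_neg (Ne.symm WithTop.coe_ne_top)]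
            exact iff_of_true le_top (ExtP.inl_le_inr.mpr ⟨y, le_rfl, le_top⟩)
          · dsimp only
            rw [if_pos rfl]
            constructor
            · intro h
              have hy : y ∈ boundary α n := (W_incl_le_q hbotα).mp h
              exact ExtP.inl_le_inr.mpr
                ⟨y, le_rfl, (W_incl_le_q hbotγ).mpr ((hmembd y).mp hy)⟩
            · intro h
              obtain ⟨y', hyy', hle⟩ := ExtP.inl_le_inr.mp h
              have hy' : σ y' ∈ boundary γ n := (W_incl_le_q hbotγ).mp hle
              exact (W_incl_le_q hbotα).mpr
                (boundary_lower ((hmembd y').mpr hy') hyy')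
          · exact absurd ⟨a, rfl⟩ hxv'
        · rcases W_cases xv with rfl | rfl | ⟨a, rfl⟩
          · dsimp only
            rw [if_neg (Ne.symm WithTop.coe_ne_top)]
            exact iff_of_false W_not_top_le_coe ExtP.not_inr_le_inl
          · dsimp only
            rw [if_pos rfl]
            exact iff_of_false W_not_q_le_incl ExtP.not_inr_le_inl
          · exact absurd ⟨a, rfl⟩ hxv
        · rcases W_cases xv with rfl | rfl | ⟨a, rfl⟩
          · rcases W_cases xv' with rfl | rfl | ⟨a, rfl⟩
            · dsimp only
              rw [if_neg (Ne.symm WithTop.coe_ne_top)]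
              exact iff_of_true le_rfl (ExtP.inr_le_inr.mpr le_rfl)
            · dsimp only
              rw [if_neg (Ne.symm WithTop.coe_ne_top), if_pos rfl]
              exact iff_of_false W_not_top_le_coe
                (fun h => W_not_top_le_coe (ExtP.inr_le_inr.mp h))
            · exact absurd ⟨a, rfl⟩ hxv'
          · rcases W_cases xv' with rfl | rfl | ⟨a, rfl⟩
            · dsimp only
              rw [if_neg (Ne.symm WithTop.coe_ne_top), if_pos rfl]
              exact iff_of_true le_top (ExtP.inr_le_inr.mpr le_top)
            · dsimp only
              rw [if_pos rfl]
              exact iff_of_true le_rfl (ExtP.inr_le_inr.mpr le_rfl)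
            · exact absurd ⟨a, rfl⟩ hxv'
          · exact absurd ⟨a, rfl⟩ hxv } with hisoEAdef
  -- rank computations in the extension via the isomorphism
  have hrhoE : ∀ p, rho p = rho (isoEA p) := fun p => (rho_orderIso isoEA p).symm
  have hiso_inl : ∀ y : α, isoEA (ExtP.mk (Sum.inl y)) =
      ((Semisusp.incl y : Semisusp α (boundary α n)) :
        WithTop (Semisusp α (boundary α n))) := by
    intro y
    rw [hisoEAdef]
    rfl
  have hiso_q : isoEA (ExtP.mk (Sum.inr ⟨((Semisusp.q : Semisusp γ (boundary γ n)) :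
      WithTop (Semisusp γ (boundary γ n))), hq_notG⟩)) =
      ((Semisusp.q : Semisusp α (boundary α n)) :
        WithTop (Semisusp α (boundary α n))) := by
    rw [hisoEAdef]
    simp
  have hiso_top : isoEA (ExtP.mk (Sum.inr ⟨(⊤ : WithTop (Semisusp γ (boundary γ n))),
      htop_notG⟩)) = (⊤ : WithTop (Semisusp α (boundary α n))) := by
    rw [hisoEAdef]
    simp
  have hrE_inl : ∀ y : α, rho (ExtP.mk (Sum.inl y) : ExtP
      (fun y => ((Semisusp.incl (σ y) : Semisusp γ (boundary γ n)) :
        WithTop (Semisusp γ (boundary γ n))))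
      (Set.range fun z : γ =>
        ((Semisusp.incl z : Semisusp γ (boundary γ n)) :
          WithTop (Semisusp γ (boundary γ n))))) = rho y := by
    intro y
    rw [hrhoE, hiso_inl, hs1A]
  have hrE_q : rho (ExtP.mk (Sum.inr ⟨((Semisusp.q : Semisusp γ (boundary γ n)) :
      WithTop (Semisusp γ (boundary γ n))), hq_notG⟩) : ExtP
      (fun y => ((Semisusp.incl (σ y) : Semisusp γ (boundary γ n)) :
        WithTop (Semisusp γ (boundary γ n))))
      (Set.range fun z : γ =>
        ((Semisusp.incl z : Semisusp γ (boundary γ n)) :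
          WithTop (Semisusp γ (boundary γ n))))) = n := by
    rw [hrhoE, hiso_q, hs2A]
  have hrE_top : rho (ExtP.mk (Sum.inr ⟨(⊤ : WithTop (Semisusp γ (boundary γ n))),
      htop_notG⟩) : ExtP
      (fun y => ((Semisusp.incl (σ y) : Semisusp γ (boundary γ n)) :
        WithTop (Semisusp γ (boundary γ n))))
      (Set.range fun z : γ =>
        ((Semisusp.incl z : Semisusp γ (boundary γ n)) :
          WithTop (Semisusp γ (boundary γ n))))) = n + 1 := by
    rw [hrhoE, hiso_top, hs3A]
  refine ⟨?_, ?_, ⟨isoEA, ?_⟩, hbdpre⟩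
  · -- near-Eulerianness of α
    refine ⟨WithTop (Semisusp α (boundary α n)), inferInstance, hfinA,
      ((Semisusp.q : Semisusp α (boundary α n)) : WithTop (Semisusp α (boundary α n))),
      (⊤ : WithTop (Semisusp α (boundary α n))),
      ⟨?_, ⟨⊤, fun z => le_top⟩, hs4A, hbalA⟩,
      fun z => le_top, hs2A, WithTop.coe_ne_top, ⟨?_⟩⟩
    · refine ⟨((Semisusp.incl (⊥ : α) : Semisusp α (boundary α n)) :
        WithTop (Semisusp α (boundary α n))), ?_⟩
      intro z
      rcases W_cases z with rfl | rfl | ⟨a, rfl⟩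
      · exact le_top
      · exact (W_incl_le_q hbotα).mpr hbotα
      · exact W_incl_le_incl.mpr bot_le
    · refine ⟨⟨fun a => ⟨((Semisusp.incl a : Semisusp α (boundary α n)) :
          WithTop (Semisusp α (boundary α n))), W_incl_ne_q, WithTop.coe_ne_top⟩,
        fun x => if h : ∃ a : α, ((Semisusp.incl a : Semisusp α (boundary α n)) :
            WithTop (Semisusp α (boundary α n))) =
            (x : WithTop (Semisusp α (boundary α n)))
          then h.choose else ⊥, ?_, ?_⟩, ?_⟩
      · intro a
        have hex : ∃ a' : α, ((Semisusp.incl a' : Semisusp α (boundary α n)) :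
            WithTop (Semisusp α (boundary α n))) =
            ((Semisusp.incl a : Semisusp α (boundary α n)) :
              WithTop (Semisusp α (boundary α n))) := ⟨a, rfl⟩
        dsimp only
        rw [dif_pos hex]
        exact W_incl_inj hex.choose_spec
      · rintro ⟨xv, hx1, hx2⟩
        rcases W_cases xv with rfl | rfl | ⟨a, rfl⟩
        · exact absurd rfl hx2
        · exact absurd rfl hx1
        · have hex : ∃ a' : α, ((Semisusp.incl a' : Semisusp α (boundary α n)) :
              WithTop (Semisusp α (boundary α n))) =
              ((Semisusp.incl a : Semisusp α (boundary α n)) :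
                WithTop (Semisusp α (boundary α n))) := ⟨a, rfl⟩
          dsimp only
          rw [dif_pos hex]
          exact Subtype.ext hex.choose_spec
      · intro a b
        simp only [Equiv.coe_fn_mk]
        rw [Subtype.mk_le_mk]
        exact W_incl_le_incl
  · -- the extension map is an SFS
    have hrE_q' : ∀ h : ((Semisusp.q : Semisusp γ (boundary γ n)) :
        WithTop (Semisusp γ (boundary γ n))) ∉ Set.range (fun z : γ =>
        ((Semisusp.incl z : Semisusp γ (boundary γ n)) :
          WithTop (Semisusp γ (boundary γ n)))),
        rho (ExtP.mk (Sum.inr ⟨((Semisusp.q : Semisusp γ (boundary γ n)) :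
          WithTop (Semisusp γ (boundary γ n))), h⟩) : ExtP
          (fun y => ((Semisusp.incl (σ y) : Semisusp γ (boundary γ n)) :
            WithTop (Semisusp γ (boundary γ n))))
          (Set.range fun z : γ =>
            ((Semisusp.incl z : Semisusp γ (boundary γ n)) :
              WithTop (Semisusp γ (boundary γ n))))) = n := fun h => hrE_q
    have hrE_top' : ∀ h : (⊤ : WithTop (Semisusp γ (boundary γ n))) ∉ Set.range
        (fun z : γ => ((Semisusp.incl z : Semisusp γ (boundary γ n)) :
          WithTop (Semisusp γ (boundary γ n)))),
        rho (ExtP.mk (Sum.inr ⟨(⊤ : WithTop (Semisusp γ (boundary γ n))), h⟩) : ExtP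
          (fun y => ((Semisusp.incl (σ y) : Semisusp γ (boundary γ n)) :
            WithTop (Semisusp γ (boundary γ n))))
          (Set.range fun z : γ =>
            ((Semisusp.incl z : Semisusp γ (boundary γ n)) :
              WithTop (Semisusp γ (boundary γ n))))) = n + 1 := fun h => hrE_top
    refine ⟨?_, ?_, ?_, ?_, ?_⟩
    · -- monotone
      intro p p' h
      rcases p with ⟨y | ⟨xv, hxv⟩⟩ <;> rcases p' with ⟨y' | ⟨xv', hxv'⟩⟩
      · rw [ExtP.extMap_inl, ExtP.extMap_inl]
        exact W_incl_le_incl.mpr (hσ.1 (ExtP.inl_le_inl.mp h))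
      · rw [ExtP.extMap_inl, ExtP.extMap_inr]
        obtain ⟨y'', hyy'', hle⟩ := ExtP.inl_le_inr.mp h
        exact le_trans (W_incl_le_incl.mpr (hσ.1 hyy'')) hle
      · exact absurd h ExtP.not_inr_le_inl
      · rw [ExtP.extMap_inr, ExtP.extMap_inr]
        exact ExtP.inr_le_inr.mp h
    · -- rank increasing
      intro p
      rcases p with ⟨y | ⟨xv, hxv⟩⟩
      · rw [ExtP.extMap_inl, hrE_inl, hs1B]
        exact hσ.2.1 y
      · rcases W_cases xv with rfl | rfl | ⟨a, rfl⟩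
        · rw [ExtP.extMap_inr, hrE_top' hxv, hs3B]
        · rw [ExtP.extMap_inr, hrE_q' hxv, hs2B]
        · exact absurd ⟨a, rfl⟩ hxv
    · -- surjective
      intro x
      rcases W_cases x with rfl | rfl | ⟨z, rfl⟩
      · exact ⟨ExtP.mk (Sum.inr ⟨⊤, htop_notG⟩), rfl⟩
      · exact ⟨ExtP.mk (Sum.inr ⟨((Semisusp.q : Semisusp γ (boundary γ n)) :
          WithTop (Semisusp γ (boundary γ n))), hq_notG⟩), rfl⟩
      · obtain ⟨y, hy⟩ := hσ.2.2.1 z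
        exact ⟨ExtP.mk (Sum.inl y), by rw [ExtP.extMap_inl, hy]⟩
    · -- strong surjectivity
      intro p x hpx
      rcases W_cases x with rfl | rfl | ⟨z, rfl⟩
      · refine ⟨ExtP.mk (Sum.inr ⟨⊤, htop_notG⟩), ?_, rfl,
          by rw [hrE_top' htop_notG, hs3B]⟩
        rcases p with ⟨y | ⟨xv, hxv⟩⟩
        · exact ExtP.inl_le_inr.mpr ⟨y, le_rfl, le_top⟩
        · exact ExtP.inr_le_inr.mpr le_top
      · refine ⟨ExtP.mk (Sum.inr ⟨((Semisusp.q : Semisusp γ (boundary γ n)) :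
          WithTop (Semisusp γ (boundary γ n))), hq_notG⟩), ?_, rfl,
          by rw [hrE_q' hq_notG, hs2B]⟩
        rcases p with ⟨y | ⟨xv, hxv⟩⟩
        · exact ExtP.inl_le_inr.mpr ⟨y, le_rfl, hpx⟩
        · exact ExtP.inr_le_inr.mpr hpx
      · rcases p with ⟨y | ⟨xv, hxv⟩⟩
        · rw [ExtP.extMap_inl] at hpx
          have hσyz : σ y ≤ z := W_incl_le_incl.mp hpx
          obtain ⟨y', h1, h2, h3⟩ := hσ.2.2.2.1 y z hσyz
          refine ⟨ExtP.mk (Sum.inl y'), ExtP.inl_le_inl.mpr h1, ?_, ?_⟩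
          · rw [ExtP.extMap_inl, h2]
          · rw [hrE_inl, h3, hs1B]
        · rw [ExtP.extMap_inr] at hpx
          rcases W_cases xv with rfl | rfl | ⟨a, rfl⟩
          · exact absurd hpx W_not_top_le_coe
          · exact absurd hpx W_not_q_le_incl
          · exact absurd ⟨a, rfl⟩ hxv
    · -- fiber sums
      intro p x hpx
      rcases W_cases x with rfl | rfl | ⟨z, rfl⟩
      · have hset : {p' | ExtP.extMap _ _ p' = (⊤ : WithTop (Semisusp γ (boundary γ n)))
            ∧ p ≤ p'} = {ExtP.mk (Sum.inr ⟨⊤, htop_notG⟩)} := by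
          ext p'
          simp only [Set.mem_setOf_eq, Set.mem_singleton_iff]
          constructor
          · rintro ⟨h1, h2⟩
            rcases p' with ⟨y' | ⟨xv', hxv'⟩⟩
            · rw [ExtP.extMap_inl] at h1
              exact absurd h1 WithTop.coe_ne_top
            · rw [ExtP.extMap_inr] at h1
              exact congrArg (fun t => ExtP.mk (Sum.inr t)) (Subtype.ext h1)
          · rintro rfl
            refine ⟨rfl, ?_⟩
            rcases p with ⟨y | ⟨xv, hxv⟩⟩
            · exact ExtP.inl_le_inr.mpr ⟨y, le_rfl, le_top⟩
            · exact ExtP.inr_le_inr.mpr le_top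
        rw [hset, finsum_mem_singleton, hrE_top' htop_notG, hs3B]
      · have hset : {p' | ExtP.extMap _ _ p' =
            ((Semisusp.q : Semisusp γ (boundary γ n)) :
              WithTop (Semisusp γ (boundary γ n))) ∧ p ≤ p'} =
            {ExtP.mk (Sum.inr ⟨((Semisusp.q : Semisusp γ (boundary γ n)) :
              WithTop (Semisusp γ (boundary γ n))), hq_notG⟩)} := by
          ext p'
          simp only [Set.mem_setOf_eq, Set.mem_singleton_iff]
          constructor
          · rintro ⟨h1, h2⟩
            rcases p' with ⟨y' | ⟨xv', hxv'⟩⟩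
            · rw [ExtP.extMap_inl] at h1
              exact absurd h1 W_incl_ne_q
            · rw [ExtP.extMap_inr] at h1
              exact congrArg (fun t => ExtP.mk (Sum.inr t)) (Subtype.ext h1)
          · rintro rfl
            refine ⟨rfl, ?_⟩
            rcases p with ⟨y | ⟨xv, hxv⟩⟩
            · exact ExtP.inl_le_inr.mpr ⟨y, le_rfl, hpx⟩
            · exact ExtP.inr_le_inr.mpr hpx
        rw [hset, finsum_mem_singleton, hrE_q' hq_notG, hs2B]
      · rcases p with ⟨y | ⟨xv, hxv⟩⟩
        · rw [ExtP.extMap_inl] at hpx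
          have hσyz : σ y ≤ z := W_incl_le_incl.mp hpx
          have hset : {p' | ExtP.extMap _ _ p' =
              ((Semisusp.incl z : Semisusp γ (boundary γ n)) :
                WithTop (Semisusp γ (boundary γ n))) ∧ ExtP.mk (Sum.inl y) ≤ p'} =
              (fun y' : α => (ExtP.mk (Sum.inl y') : ExtP
                (fun y => ((Semisusp.incl (σ y) : Semisusp γ (boundary γ n)) :
                  WithTop (Semisusp γ (boundary γ n))))
                (Set.range fun z : γ =>
                  ((Semisusp.incl z : Semisusp γ (boundary γ n)) :
                    WithTop (Semisusp γ (boundary γ n)))))) ''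
                {y' | σ y' = z ∧ y ≤ y'} := by
            ext p'
            simp only [Set.mem_setOf_eq, Set.mem_image]
            constructor
            · rintro ⟨h1, h2⟩
              rcases p' with ⟨y'' | ⟨xv'', hxv''⟩⟩
              · rw [ExtP.extMap_inl] at h1
                exact ⟨y'', ⟨W_incl_inj h1, ExtP.inl_le_inl.mp h2⟩, rfl⟩
              · rw [ExtP.extMap_inr] at h1
                exact absurd ⟨z, h1.symm⟩ hxv''
            · rintro ⟨y'', ⟨hh1, hh2⟩, rfl⟩
              exact ⟨by rw [ExtP.extMap_inl, hh1], ExtP.inl_le_inl.mpr hh2⟩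
          have hinj : Set.InjOn (fun y' : α => (ExtP.mk (Sum.inl y') : ExtP
              (fun y => ((Semisusp.incl (σ y) : Semisusp γ (boundary γ n)) :
                WithTop (Semisusp γ (boundary γ n))))
              (Set.range fun z : γ =>
                ((Semisusp.incl z : Semisusp γ (boundary γ n)) :
                  WithTop (Semisusp γ (boundary γ n))))))
              {y' | σ y' = z ∧ y ≤ y'} := by
            intro u _ v _ h
            exact Sum.inl_injective (congrArg ExtP.elt h)
          rw [hset, finsum_mem_image hinj,
            finsum_mem_congr rfl (fun y' _ => by rw [hrE_inl]), hs1B]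
          exact hσ.2.2.2.2 y z hσyz
        · rw [ExtP.extMap_inr] at hpx
          rcases W_cases xv with rfl | rfl | ⟨a, rfl⟩
          · exact absurd hpx W_not_top_le_coe
          · exact absurd hpx W_not_q_le_incl
          · exact absurd ⟨a, rfl⟩ hxv
  · -- the isomorphism sends q to q
    rw [hisoEAdef]
    rfl

end CDIndex
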